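/- arXiv:2112.13245 — 3 statements merged into one kernel-verified Lean document; each statement's English description precedes it below -/
import Mathlib

section
/- Suppose m ≥ 2. Then for every λ ∈ (0,∞)^m, R(λ̂, λ) < R(λ^O, λ); that is, the second shrinkage estimator λ̂ strictly dominates λ^O at every parameter point under the standardized squared error loss. -/
open scoped BigOperators ENNReal

/-- The Poisson(μ) probability of the value `k`. -/
noncomputable def poissonPmf (mu : ℝ) (k : ℕ) : ℝ :=
  mu ^ k * Real.exp (-mu) / (Nat.factorial k)


/-- Joint pmf of (X, Y): X_1, …, X_m, Y independent, X_i ~ Po(λ_i), Y ~ Po(Σ λ_i). -/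
noncomputable def jointPmf (m : ℕ) (lam : Fin m → ℝ) (x : Fin m → ℕ) (y : ℕ) : ℝ :=
  poissonPmf (∑ i, lam i) y * ∏ i, poissonPmf (lam i) (x i)

/-- Risk of an estimator δ under the standardized squared error loss, valued in [0,∞]. -/
noncomputable def risk (m : ℕ) (δ : (Fin m → ℕ) → ℕ → Fin m → ℝ) (lam : Fin m → ℝ) : ℝ≥0∞ :=
  ∑' x : Fin m → ℕ, ∑' y : ℕ,
    ENNReal.ofReal ((∑ i, (δ x y i - lam i) ^ 2 / lam i) * jointPmf m lam x y)

/-- The maximum likelihood estimator λ^ML (real division by zero is 0, giving 0/0 = 0). -/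
noncomputable def estML (m : ℕ) (x : Fin m → ℕ) (y : ℕ) (i : Fin m) : ℝ :=
  ((∑ j, (x j : ℝ)) + (y : ℝ)) / 2 * ((x i : ℝ) / ∑ j, (x j : ℝ))

/-- The shrinkage estimator λ^O. -/
noncomputable def estO (m : ℕ) (x : Fin m → ℕ) (y : ℕ) (i : Fin m) : ℝ :=
  ((∑ j, (x j : ℝ)) + (y : ℝ) + (m : ℝ) - 1) / 2 *
    ((x i : ℝ) / ((∑ j, (x j : ℝ)) + (m : ℝ) - 1))

/-- The second shrinkage estimator λ̂. -/
noncomputable def estHat (m : ℕ) (x : Fin m → ℕ) (y : ℕ) (i : Fin m) : ℝ :=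
  ((∑ j, (x j : ℝ)) + (y : ℝ)) / 2 * ((x i : ℝ) / ((∑ j, (x j : ℝ)) + (m : ℝ) - 1))

/-- The Clevenson–Zidek estimator λ̂X based on X alone. -/
noncomputable def estCZ (m : ℕ) (x : Fin m → ℕ) (y : ℕ) (i : Fin m) : ℝ :=
  (∑ j, (x j : ℝ)) * (x i : ℝ) / ((∑ j, (x j : ℝ)) + (m : ℝ) - 1)

namespace Stmt3Aux

noncomputable def pp (mu : ℝ) (k : ℕ) : ℝ≥0∞ := ENNReal.ofReal (poissonPmf mu k)

lemma poissonPmf_pos {mu : ℝ} (hmu : 0 < mu) (k : ℕ) : 0 < poissonPmf mu k := by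
  unfold poissonPmf; positivity

lemma pp_pos {mu : ℝ} (hmu : 0 < mu) (k : ℕ) : 0 < pp mu k :=
  ENNReal.ofReal_pos.2 (poissonPmf_pos hmu k)

lemma pp_ne_top {mu : ℝ} (k : ℕ) : pp mu k ≠ ⊤ := ENNReal.ofReal_ne_top

lemma pp_mass {mu : ℝ} (hmu : 0 < mu) : ∑' k, pp mu k = 1 := by
  have h : ∀ k, poissonPmf mu k = ProbabilityTheory.poissonPMFReal mu.toNNReal k := by
    intro k
    unfold poissonPmf ProbabilityTheory.poissonPMFReal
    rw [Real.coe_toNNReal _ hmu.le]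
    ring
  have hs := ProbabilityTheory.poissonPMFRealSum mu.toNNReal
  have hs' : HasSum (fun k => poissonPmf mu k) 1 := by
    simp only [h]; exact hs
  have h2 : ∑' k, poissonPmf mu k = 1 := hs'.tsum_eq
  calc ∑' k, pp mu k = ENNReal.ofReal (∑' k, poissonPmf mu k) :=
        (ENNReal.ofReal_tsum_of_nonneg (fun k => (poissonPmf_pos hmu k).le) hs'.summable).symm
    _ = 1 := by rw [h2]; simp


lemma pp_step {mu : ℝ} (hmu : 0 < mu) (k : ℕ) :
    ((k + 1 : ℕ) : ℝ≥0∞) * pp mu (k + 1) = ENNReal.ofReal mu * pp mu k := by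
  unfold pp
  rw [← ENNReal.ofReal_natCast, ← ENNReal.ofReal_mul (by positivity),
    ← ENNReal.ofReal_mul hmu.le]
  congr 1
  unfold poissonPmf
  rw [Nat.factorial_succ]
  have hk : (Nat.factorial k : ℝ) ≠ 0 := by positivity
  push_cast
  field_simp
  ring

lemma shift_nat {mu : ℝ} (hmu : 0 < mu) (g : ℕ → ℝ≥0∞) :
    ∑' k : ℕ, (k : ℝ≥0∞) * pp mu k * g k = ENNReal.ofReal mu * ∑' k, pp mu k * g (k + 1) := by
  rw [← ENNReal.tsum_mul_left]
  have hinj : Function.Injective (fun k : ℕ => k + 1) := add_left_injective 1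
  have hsupp : Function.support (fun k : ℕ => (k : ℝ≥0∞) * pp mu k * g k)
      ⊆ Set.range (fun k : ℕ => k + 1) := by
    intro k hk
    rcases k with _ | k
    · simp at hk
    · exact ⟨k, rfl⟩
  rw [← Function.Injective.tsum_eq hinj hsupp]
  congr 1
  funext k
  show ((k+1 : ℕ) : ℝ≥0∞) * pp mu (k+1) * g (k+1) = ENNReal.ofReal mu * (pp mu k * g (k+1))
  rw [show ((k+1 : ℕ) : ℝ≥0∞) * pp mu (k+1) * g (k+1) =
    (((k+1 : ℕ) : ℝ≥0∞) * pp mu (k+1)) * g (k+1) by ring, pp_step hmu k]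
  ring

lemma pp_mean {mu : ℝ} (hmu : 0 < mu) : ∑' k : ℕ, pp mu k * k = ENNReal.ofReal mu := by
  have := shift_nat hmu (fun _ => 1)
  simp only [mul_one] at this
  rw [pp_mass hmu, mul_one] at this
  rw [← this]
  congr 1; funext k; ring

lemma pp_sq {mu : ℝ} (hmu : 0 < mu) :
    ∑' k : ℕ, pp mu k * (k : ℝ≥0∞) ^ 2 = ENNReal.ofReal mu * ENNReal.ofReal mu + ENNReal.ofReal mu := by
  have := shift_nat hmu (fun k => (k : ℝ≥0∞))
  have h2 : ∑' k, pp mu k * ((k : ℝ≥0∞) + 1) = ENNReal.ofReal mu + 1 := by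
    rw [show (fun k : ℕ => pp mu k * ((k : ℝ≥0∞) + 1)) = fun k => pp mu k * k + pp mu k by
      funext k; ring, ENNReal.tsum_add, pp_mean hmu, pp_mass hmu]
  rw [show (fun k : ℕ => (k : ℝ≥0∞) * pp mu k * (k:ℝ≥0∞)) = fun k => pp mu k * (k:ℝ≥0∞)^2 by
      funext k; ring] at this
  push_cast at this
  rw [this, h2, mul_add, mul_one]


lemma ysum_quad {mu : ℝ} (hmu : 0 < mu) (c₀ c₁ c₂ : ℝ) (h₀ : 0 ≤ c₀) (h₁ : 0 ≤ c₁) (h₂ : 0 ≤ c₂) :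
    ∑' y : ℕ, pp mu y * ENNReal.ofReal (c₀ + c₁ * y + c₂ * (y : ℝ) ^ 2)
      = ENNReal.ofReal c₀ + ENNReal.ofReal mu * ENNReal.ofReal c₁
        + (ENNReal.ofReal mu * ENNReal.ofReal mu + ENNReal.ofReal mu) * ENNReal.ofReal c₂ := by
  have hpt : ∀ y : ℕ, pp mu y * ENNReal.ofReal (c₀ + c₁ * y + c₂ * (y : ℝ) ^ 2)
      = pp mu y * ENNReal.ofReal c₀ + ENNReal.ofReal c₁ * (pp mu y * y)
        + ENNReal.ofReal c₂ * (pp mu y * (y : ℝ≥0∞) ^ 2) := by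
    intro y
    rw [ENNReal.ofReal_add (by positivity) (by positivity),
        ENNReal.ofReal_add h₀ (by positivity),
        ENNReal.ofReal_mul h₁, ENNReal.ofReal_mul h₂,
        show ((y : ℝ) ^ 2 : ℝ) = ((y : ℝ)) ^ 2 from rfl,
        ENNReal.ofReal_pow (by positivity), ENNReal.ofReal_natCast]
    ring
  calc ∑' y : ℕ, pp mu y * ENNReal.ofReal (c₀ + c₁ * y + c₂ * (y : ℝ) ^ 2)
      = ∑' y : ℕ, (pp mu y * ENNReal.ofReal c₀ + ENNReal.ofReal c₁ * (pp mu y * y)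
          + ENNReal.ofReal c₂ * (pp mu y * (y : ℝ≥0∞) ^ 2)) := by
        exact tsum_congr hpt
    _ = (∑' y : ℕ, pp mu y * ENNReal.ofReal c₀)
          + (∑' y : ℕ, ENNReal.ofReal c₁ * (pp mu y * y))
          + (∑' y : ℕ, ENNReal.ofReal c₂ * (pp mu y * (y : ℝ≥0∞) ^ 2)) := by
        rw [ENNReal.tsum_add, ENNReal.tsum_add]
    _ = ENNReal.ofReal c₀ + ENNReal.ofReal mu * ENNReal.ofReal c₁
        + (ENNReal.ofReal mu * ENNReal.ofReal mu + ENNReal.ofReal mu) * ENNReal.ofReal c₂ := by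
        rw [ENNReal.tsum_mul_left, ENNReal.tsum_mul_left, ENNReal.tsum_mul_right,
          pp_mass hmu, pp_mean hmu, pp_sq hmu]
        ring

lemma tsum_prod_pi : ∀ {n : ℕ} (w : Fin n → ℕ → ℝ≥0∞),
    ∑' x : Fin n → ℕ, ∏ i, w i (x i) = ∏ i, ∑' k : ℕ, w i k := by
  intro n
  induction n with
  | zero =>
    intro w
    simp only [Finset.univ_eq_empty, Finset.prod_empty]
    rw [tsum_eq_single (fun i : Fin 0 => (i.elim0 : ℕ))]
    · intro b hb; exact absurd (Subsingleton.elim b _) hb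
  | succ n ih =>
    intro w
    have he := ((Fin.consEquiv (fun _ : Fin (n+1) => ℕ)).tsum_eq
      (fun x : Fin (n+1) → ℕ => ∏ i, w i (x i))).symm
    rw [he, ENNReal.tsum_prod']
    have hpt : ∀ (a : ℕ) (u : Fin n → ℕ),
        (∏ i, w i (((Fin.consEquiv (fun _ : Fin (n+1) => ℕ)) (a, u)) i))
          = w 0 a * ∏ i : Fin n, w i.succ (u i) := by
      intro a u
      rw [Fin.prod_univ_succ]
      simp [Fin.consEquiv]
    calc ∑' (a : ℕ) (u : Fin n → ℕ), (fun x : Fin (n+1) → ℕ => ∏ i, w i (x i))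
          ((Fin.consEquiv (fun _ : Fin (n+1) => ℕ)) (a, u))
        = ∑' (a : ℕ) (u : Fin n → ℕ), w 0 a * ∏ i : Fin n, w i.succ (u i) := by
          exact tsum_congr fun a => tsum_congr fun u => hpt a u
      _ = (∑' a : ℕ, w 0 a) * ∑' u : Fin n → ℕ, ∏ i : Fin n, w i.succ (u i) := by
          rw [← ENNReal.tsum_mul_right]
          exact tsum_congr fun a => by rw [ENNReal.tsum_mul_left]
      _ = ∏ i, ∑' k : ℕ, w i k := by
          rw [ih, Fin.prod_univ_succ]


variable {m : ℕ}

noncomputable def W (lam : Fin m → ℝ) (x : Fin m → ℕ) : ℝ≥0∞ := ∏ i, pp (lam i) (x i)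

def tS (x : Fin m → ℕ) : ℕ := ∑ j, x j

lemma W_mass (lam : Fin m → ℝ) (hlam : ∀ i, 0 < lam i) : ∑' x : Fin m → ℕ, W lam x = 1 := by
  unfold W
  rw [tsum_prod_pi]
  simp [pp_mass (hlam _)]

lemma W_pos (lam : Fin m → ℝ) (hlam : ∀ i, 0 < lam i) (x : Fin m → ℕ) : 0 < W lam x := by
  unfold W
  rw [CanonicallyOrderedAdd.prod_pos]
  exact fun i _ => pp_pos (hlam i) _

lemma W_ne_top (lam : Fin m → ℝ) (x : Fin m → ℕ) : W lam x ≠ ⊤ := by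
  unfold W
  exact (ENNReal.prod_lt_top (fun i _ => (pp_ne_top _).lt_top)).ne

lemma shiftX (lam : Fin m → ℝ) (hlam : ∀ i, 0 < lam i) (i : Fin m) (g : ℕ → ℕ → ℝ≥0∞) :
    ∑' x : Fin m → ℕ, W lam x * (x i : ℝ≥0∞) * g (x i) (tS x)
      = ENNReal.ofReal (lam i) * ∑' x : Fin m → ℕ, W lam x * g (x i + 1) (tS x + 1) := by
  set ψ : (Fin m → ℕ) → (Fin m → ℕ) := fun x => Function.update x i (x i + 1) with hψ
  have hψi : ∀ x, ψ x i = x i + 1 := fun x => Function.update_self i _ x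
  have hψj : ∀ x j, j ≠ i → ψ x j = x j := fun x j hj => Function.update_of_ne hj _ x
  have hinj : Function.Injective ψ := by
    intro a b hab
    funext j
    by_cases hj : j = i
    · subst hj
      have h1 := congrFun hab j
      rw [hψi, hψi] at h1
      omega
    · have h1 := congrFun hab j
      rwa [hψj a j hj, hψj b j hj] at h1
  have hsupp : Function.support (fun x => W lam x * (x i : ℝ≥0∞) * g (x i) (tS x))
      ⊆ Set.range ψ := by
    intro x hx
    rcases Nat.eq_zero_or_pos (x i) with h0 | hpos
    · exact absurd (by simp [h0]) hx
    · refine ⟨Function.update x i (x i - 1), ?_⟩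
      have h1 : x i - 1 + 1 = x i := Nat.succ_pred_eq_of_pos hpos
      simp only [hψ, Function.update_idem, Function.update_self, h1, Function.update_eq_self]
  have htS : ∀ x, tS (ψ x) = tS x + 1 := by
    intro x
    unfold tS
    have h1 : ∑ j, ψ x j = ψ x i + ∑ j ∈ Finset.univ.erase i, ψ x j :=
      (Finset.add_sum_erase _ _ (Finset.mem_univ i)).symm
    have h2 : ∑ j, x j = x i + ∑ j ∈ Finset.univ.erase i, x j :=
      (Finset.add_sum_erase _ _ (Finset.mem_univ i)).symm
    have h3 : ∑ j ∈ Finset.univ.erase i, ψ x j = ∑ j ∈ Finset.univ.erase i, x j :=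
      Finset.sum_congr rfl fun j hj => hψj x j (Finset.ne_of_mem_erase hj)
    rw [h1, h2, h3, hψi]
    omega
  have hWkey : ∀ x, W lam (ψ x) * ((ψ x) i : ℝ≥0∞)
      = ENNReal.ofReal (lam i) * W lam x := by
    intro x
    have hWψ : W lam (ψ x) = pp (lam i) (x i + 1) * ∏ j ∈ Finset.univ.erase i, pp (lam j) (x j) := by
      unfold W
      rw [← Finset.mul_prod_erase _ _ (Finset.mem_univ i), hψi]
      congr 1
      exact Finset.prod_congr rfl fun j hj => by rw [hψj x j (Finset.ne_of_mem_erase hj)]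
    have hWx : W lam x = pp (lam i) (x i) * ∏ j ∈ Finset.univ.erase i, pp (lam j) (x j) :=
      (Finset.mul_prod_erase _ _ (Finset.mem_univ i)).symm
    have hstep := pp_step (hlam i) (x i)
    rw [hWψ, hWx, hψi]
    push_cast
    push_cast at hstep
    calc pp (lam i) (x i + 1) * (∏ j ∈ Finset.univ.erase i, pp (lam j) (x j)) * ((x i : ℝ≥0∞) + 1)
        = (((x i : ℝ≥0∞) + 1) * pp (lam i) (x i + 1)) * ∏ j ∈ Finset.univ.erase i, pp (lam j) (x j) := by
          ring
      _ = (ENNReal.ofReal (lam i) * pp (lam i) (x i)) * ∏ j ∈ Finset.univ.erase i, pp (lam j) (x j) := by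
          rw [hstep]
      _ = ENNReal.ofReal (lam i) * (pp (lam i) (x i) * ∏ j ∈ Finset.univ.erase i, pp (lam j) (x j)) := by
          ring
  calc ∑' x : Fin m → ℕ, W lam x * (x i : ℝ≥0∞) * g (x i) (tS x)
      = ∑' x : Fin m → ℕ, W lam (ψ x) * ((ψ x) i : ℝ≥0∞) * g ((ψ x) i) (tS (ψ x)) :=
        (Function.Injective.tsum_eq hinj hsupp).symm
    _ = ∑' x : Fin m → ℕ, ENNReal.ofReal (lam i) * (W lam x * g (x i + 1) (tS x + 1)) := by
        refine tsum_congr fun x => ?_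
        rw [htS, hψi, ← mul_assoc, ← hψi x, hWkey x, mul_assoc]
    _ = ENNReal.ofReal (lam i) * ∑' x : Fin m → ℕ, W lam x * g (x i + 1) (tS x + 1) :=
        ENNReal.tsum_mul_left


section Derived

variable (lam : Fin m → ℝ)

/-- `Ex lam f = E[f(S)]` where `S = ∑ X_i`. -/
noncomputable def Ex (f : ℕ → ℝ) : ℝ≥0∞ :=
  ∑' x : Fin m → ℕ, W lam x * ENNReal.ofReal (f (tS x))

lemma Ex_congr {f g : ℕ → ℝ} (h : ∀ n, f n = g n) : Ex lam f = Ex lam g := by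
  unfold Ex; exact tsum_congr fun x => by rw [h]

lemma Ex_add (f g : ℕ → ℝ) (hf : ∀ n, 0 ≤ f n) (hg : ∀ n, 0 ≤ g n) :
    Ex lam (fun n => f n + g n) = Ex lam f + Ex lam g := by
  unfold Ex
  rw [← ENNReal.tsum_add]
  exact tsum_congr fun x => by
    rw [ENNReal.ofReal_add (hf _) (hg _), mul_add]

lemma Ex_smul (c : ℝ) (hc : 0 ≤ c) (f : ℕ → ℝ) :
    Ex lam (fun n => c * f n) = ENNReal.ofReal c * Ex lam f := by
  unfold Ex
  rw [← ENNReal.tsum_mul_left]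
  exact tsum_congr fun x => by rw [ENNReal.ofReal_mul hc]; ring

lemma Ex_const (hlam : ∀ i, 0 < lam i) (c : ℝ) : Ex lam (fun _ => c) = ENNReal.ofReal c := by
  unfold Ex
  simp only []
  rw [ENNReal.tsum_mul_right, W_mass lam hlam, one_mul]

lemma Ex_mono {f g : ℕ → ℝ} (h : ∀ n, f n ≤ g n) : Ex lam f ≤ Ex lam g :=
  Summable.tsum_le_tsum (fun x => mul_le_mul_right (ENNReal.ofReal_le_ofReal (h _)) _)
    ENNReal.summable ENNReal.summable

lemma Ex_ne_top_of_le (hlam : ∀ i, 0 < lam i) {f : ℕ → ℝ} {c : ℝ} (h : ∀ n, f n ≤ c) : Ex lam f ≠ ⊤ := by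
  have : Ex lam f ≤ ENNReal.ofReal c := by
    rw [← Ex_const lam hlam c]; exact Ex_mono lam h
  exact (this.trans_lt ENNReal.ofReal_lt_top).ne

/-- Shift identity for `S`: `E[S·f(S)] = Λ·E[f(S+1)]`. -/
lemma Ex_shift (hlam : ∀ i, 0 < lam i) (f : ℕ → ℝ) (hf : ∀ n, 0 ≤ f n) :
    Ex lam (fun n => (n : ℝ) * f n)
      = ENNReal.ofReal (∑ i, lam i) * Ex lam (fun n => f (n + 1)) := by
  unfold Ex
  have hpt : ∀ x : Fin m → ℕ, W lam x * ENNReal.ofReal ((tS x : ℝ) * f (tS x))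
      = ∑ i, W lam x * (x i : ℝ≥0∞) * ENNReal.ofReal (f (tS x)) := by
    intro x
    rw [ENNReal.ofReal_mul (by positivity), ENNReal.ofReal_natCast]
    have : ((tS x : ℕ) : ℝ≥0∞) = ∑ i, (x i : ℝ≥0∞) := by
      unfold tS; push_cast; rfl
    rw [this]
    rw [Finset.sum_mul, Finset.mul_sum]
    exact Finset.sum_congr rfl fun i _ => by ring
  rw [tsum_congr hpt, Summable.tsum_finsetSum (fun i _ => ENNReal.summable)]
  have hi : ∀ i : Fin m, ∑' x : Fin m → ℕ, W lam x * (x i : ℝ≥0∞) * ENNReal.ofReal (f (tS x))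
      = ENNReal.ofReal (lam i) * ∑' x : Fin m → ℕ, W lam x * ENNReal.ofReal (f (tS x + 1)) :=
    fun i => shiftX lam hlam i (fun _ n => ENNReal.ofReal (f n))
  rw [Finset.sum_congr rfl fun i _ => hi i, ← Finset.sum_mul,
    ← ENNReal.ofReal_sum_of_nonneg (fun i _ => (hlam i).le)]

/-- Key identity: `E[Q·f(S)] = E[(S+m)·f(S+1)]` where `Q = ∑ X_i²/λ_i`. -/
lemma Ex_Q (hlam : ∀ i, 0 < lam i) (f : ℕ → ℝ) (hf : ∀ n, 0 ≤ f n) :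
    (∑' x : Fin m → ℕ, W lam x * ENNReal.ofReal ((∑ i, (x i : ℝ) ^ 2 / lam i) * f (tS x)))
      = Ex lam (fun n => ((n : ℝ) + m) * f (n + 1)) := by
  have hpt : ∀ x : Fin m → ℕ, W lam x * ENNReal.ofReal ((∑ i, (x i : ℝ) ^ 2 / lam i) * f (tS x))
      = ∑ i, W lam x * (x i : ℝ≥0∞) *
          (ENNReal.ofReal ((x i : ℝ) / lam i) * ENNReal.ofReal (f (tS x))) := by
    intro x
    have hQ : (0 : ℝ) ≤ ∑ i, (x i : ℝ) ^ 2 / lam i :=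
      Finset.sum_nonneg fun i _ => div_nonneg (by positivity) (hlam i).le
    rw [ENNReal.ofReal_mul hQ,
      ENNReal.ofReal_sum_of_nonneg
        (fun i _ => div_nonneg (by positivity) (hlam i).le)]
    rw [Finset.sum_mul, Finset.mul_sum]
    refine Finset.sum_congr rfl fun i _ => ?_
    have : (x i : ℝ) ^ 2 / lam i = (x i : ℝ) * ((x i : ℝ) / lam i) := by ring
    rw [this, ENNReal.ofReal_mul (by positivity : (0:ℝ) ≤ (x i : ℝ)), ENNReal.ofReal_natCast]
    ring
  rw [tsum_congr hpt, Summable.tsum_finsetSum (fun i _ => ENNReal.summable)]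
  set E1 : ℝ≥0∞ := ∑' x : Fin m → ℕ, W lam x * ENNReal.ofReal (f (tS x + 1)) with hE1
  set E2 : ℝ≥0∞ := ∑' x : Fin m → ℕ, W lam x * ENNReal.ofReal (f (tS x + 2)) with hE2
  have hi : ∀ i : Fin m,
      (∑' x : Fin m → ℕ, W lam x * (x i : ℝ≥0∞) *
        (ENNReal.ofReal ((x i : ℝ) / lam i) * ENNReal.ofReal (f (tS x))))
      = ENNReal.ofReal (lam i) * E2 + E1 := by
    intro i
    rw [shiftX lam hlam i (fun k n => ENNReal.ofReal ((k : ℝ) / lam i) * ENNReal.ofReal (f n))]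
    have hpt2 : ∀ x : Fin m → ℕ,
        W lam x * (ENNReal.ofReal (((x i + 1 : ℕ) : ℝ) / lam i) * ENNReal.ofReal (f (tS x + 1)))
          * ENNReal.ofReal (lam i)
        = W lam x * (x i : ℝ≥0∞) * ENNReal.ofReal (f (tS x + 1))
          + W lam x * ENNReal.ofReal (f (tS x + 1)) := by
      intro x
      have h1 : ENNReal.ofReal (((x i + 1 : ℕ) : ℝ) / lam i) * ENNReal.ofReal (lam i)
          = (x i : ℝ≥0∞) + 1 := by
        rw [← ENNReal.ofReal_mul (div_nonneg (by positivity) (hlam i).le)]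
        rw [div_mul_cancel₀ _ (hlam i).ne', ENNReal.ofReal_natCast]
        push_cast
        ring
      calc W lam x * (ENNReal.ofReal (((x i + 1 : ℕ) : ℝ) / lam i) * ENNReal.ofReal (f (tS x + 1)))
            * ENNReal.ofReal (lam i)
          = W lam x * (ENNReal.ofReal (((x i + 1 : ℕ) : ℝ) / lam i) * ENNReal.ofReal (lam i))
            * ENNReal.ofReal (f (tS x + 1)) := by ring
        _ = W lam x * ((x i : ℝ≥0∞) + 1) * ENNReal.ofReal (f (tS x + 1)) := by rw [h1]
        _ = W lam x * (x i : ℝ≥0∞) * ENNReal.ofReal (f (tS x + 1))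
            + W lam x * ENNReal.ofReal (f (tS x + 1)) := by ring
    calc ENNReal.ofReal (lam i) * ∑' x : Fin m → ℕ,
          W lam x * (ENNReal.ofReal (((x i + 1 : ℕ) : ℝ) / lam i) * ENNReal.ofReal (f (tS x + 1)))
        = ∑' x : Fin m → ℕ, (W lam x *
            (ENNReal.ofReal (((x i + 1 : ℕ) : ℝ) / lam i) * ENNReal.ofReal (f (tS x + 1)))
            * ENNReal.ofReal (lam i)) := by
          rw [← ENNReal.tsum_mul_left]
          exact tsum_congr fun x => by ring
      _ = ∑' x : Fin m → ℕ, (W lam x * (x i : ℝ≥0∞) * ENNReal.ofReal (f (tS x + 1))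
            + W lam x * ENNReal.ofReal (f (tS x + 1))) := tsum_congr hpt2
      _ = (∑' x : Fin m → ℕ, W lam x * (x i : ℝ≥0∞) * ENNReal.ofReal (f (tS x + 1))) + E1 := by
          rw [ENNReal.tsum_add]
      _ = ENNReal.ofReal (lam i) * E2 + E1 := by
          rw [shiftX lam hlam i (fun _ n => ENNReal.ofReal (f (n + 1)))]
  rw [Finset.sum_congr rfl fun i _ => hi i]
  rw [Finset.sum_add_distrib, ← Finset.sum_mul, Finset.sum_const, Finset.card_univ,
    Fintype.card_fin, ← ENNReal.ofReal_sum_of_nonneg (fun i _ => (hlam i).le)]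
  -- RHS computation
  have hRHS : Ex lam (fun n => ((n : ℝ) + m) * f (n + 1))
      = ENNReal.ofReal (∑ i, lam i) * E2 + m • E1 := by
    have hsplit : Ex lam (fun n => ((n : ℝ) + m) * f (n + 1))
        = Ex lam (fun n => (n : ℝ) * f (n + 1)) + Ex lam (fun n => (m : ℝ) * f (n + 1)) := by
      rw [← Ex_add lam _ _ (fun n => mul_nonneg (by positivity) (hf _))
        (fun n => mul_nonneg (by positivity) (hf _))]
      exact Ex_congr lam fun n => by ring
    rw [hsplit, Ex_shift lam hlam (fun n => f (n + 1)) (fun n => hf _),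
      Ex_smul lam (m : ℝ) (by positivity)]
    have h1 : Ex lam (fun n => f (n + 1 + 1)) = E2 := rfl
    have h2 : Ex lam (fun n => f (n + 1)) = E1 := rfl
    rw [h1, h2, ENNReal.ofReal_natCast]
    congr 1
    simp [nsmul_eq_mul]
  rw [hRHS]

end Derived


section Main

variable {lam : Fin m → ℝ}

lemma lamsum_pos (hm : 2 ≤ m) (hlam : ∀ i, 0 < lam i) : 0 < ∑ i, lam i := by
  have : Nonempty (Fin m) := ⟨⟨0, by omega⟩⟩
  exact Finset.sum_pos (fun i _ => hlam i) Finset.univ_nonempty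

lemma dpos (hm : 2 ≤ m) (n : ℕ) : 0 < (n : ℝ) + m - 1 := by
  have h2 : (2 : ℝ) ≤ (m : ℝ) := by exact_mod_cast hm
  have := Nat.cast_nonneg (α := ℝ) n
  linarith

lemma dpos' (hm : 2 ≤ m) (n : ℕ) : 0 < (n : ℝ) + m := by
  have := dpos hm n; linarith

/-- Risk factorized into the product form. -/
lemma risk_eq (hm : 2 ≤ m) (hlam : ∀ i, 0 < lam i) (δ : (Fin m → ℕ) → ℕ → Fin m → ℝ) :
    risk m δ lam = ∑' x : Fin m → ℕ, W lam x *
      ∑' y : ℕ, pp (∑ i, lam i) y *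
        ENNReal.ofReal (∑ i, (δ x y i - lam i) ^ 2 / lam i) := by
  unfold risk
  refine tsum_congr fun x => ?_
  rw [← ENNReal.tsum_mul_left]
  refine tsum_congr fun y => ?_
  have hL : 0 ≤ ∑ i, (δ x y i - lam i) ^ 2 / lam i :=
    Finset.sum_nonneg fun i _ => div_nonneg (sq_nonneg _) (hlam i).le
  have hpY : 0 ≤ poissonPmf (∑ i, lam i) y := (poissonPmf_pos (lamsum_pos hm hlam) y).le
  unfold jointPmf
  rw [ENNReal.ofReal_mul hL, ENNReal.ofReal_mul hpY,
    ENNReal.ofReal_prod_of_nonneg (fun i _ => (poissonPmf_pos (hlam i) (x i)).le)]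
  unfold W pp
  ring

/-- Splitting of the risk using the pointwise identity `L + G = H`. -/
lemma risk_split (hm : 2 ≤ m) (hlam : ∀ i, 0 < lam i)
    (δ : (Fin m → ℕ) → ℕ → Fin m → ℝ) (G H : (Fin m → ℕ) → ℕ → ℝ)
    (hG : ∀ x y, 0 ≤ G x y)
    (hLG : ∀ x y, (∑ i, (δ x y i - lam i) ^ 2 / lam i) + G x y = H x y) :
    risk m δ lam + (∑' x : Fin m → ℕ, W lam x *
        ∑' y : ℕ, pp (∑ i, lam i) y * ENNReal.ofReal (G x y))
      = ∑' x : Fin m → ℕ, W lam x *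
          ∑' y : ℕ, pp (∑ i, lam i) y * ENNReal.ofReal (H x y) := by
  rw [risk_eq hm hlam δ, ← ENNReal.tsum_add]
  refine tsum_congr fun x => ?_
  rw [← mul_add, ← ENNReal.tsum_add]
  congr 1
  refine tsum_congr fun y => ?_
  have hL : 0 ≤ ∑ i, (δ x y i - lam i) ^ 2 / lam i :=
    Finset.sum_nonneg fun i _ => div_nonneg (sq_nonneg _) (hlam i).le
  rw [← mul_add, ← ENNReal.ofReal_add hL (hG x y), hLG x y]


lemma sum_cast (x : Fin m → ℕ) : ((tS x : ℕ) : ℝ) = ∑ j, (x j : ℝ) := by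
  unfold tS; push_cast; rfl

lemma estO_identity (hm : 2 ≤ m) (hlam : ∀ i, 0 < lam i) (x : Fin m → ℕ) (y : ℕ) :
    (∑ i, (estO m x y i - lam i) ^ 2 / lam i)
      + ((tS x : ℝ) + y + m - 1) * (tS x : ℝ) / ((tS x : ℝ) + m - 1)
    = (∑ i, (x i : ℝ) ^ 2 / lam i) * (((tS x : ℝ) + y + m - 1) ^ 2
        / (4 * ((tS x : ℝ) + m - 1) ^ 2)) + ∑ i, lam i := by
  have hd := (dpos hm (tS x)).ne'
  have hc := sum_cast x
  have h2 : ((tS x : ℝ) + y + m - 1) * (tS x : ℝ) / ((tS x : ℝ) + m - 1)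
      = ∑ i, ((tS x : ℝ) + y + m - 1) * (x i : ℝ) / ((tS x : ℝ) + m - 1) := by
    rw [← Finset.sum_div, ← Finset.mul_sum, ← hc]
  have h3 : (∑ i, (x i : ℝ) ^ 2 / lam i)
        * (((tS x : ℝ) + y + m - 1) ^ 2 / (4 * ((tS x : ℝ) + m - 1) ^ 2))
      = ∑ i, ((x i : ℝ) ^ 2 / lam i)
        * (((tS x : ℝ) + y + m - 1) ^ 2 / (4 * ((tS x : ℝ) + m - 1) ^ 2)) := by
    rw [Finset.sum_mul]
  rw [h2, h3, ← Finset.sum_add_distrib, ← Finset.sum_add_distrib]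
  refine Finset.sum_congr rfl fun i _ => ?_
  unfold estO
  rw [← hc]
  have hli := (hlam i).ne'
  field_simp
  ring

lemma estHat_identity (hm : 2 ≤ m) (hlam : ∀ i, 0 < lam i) (x : Fin m → ℕ) (y : ℕ) :
    (∑ i, (estHat m x y i - lam i) ^ 2 / lam i)
      + ((tS x : ℝ) + y) * (tS x : ℝ) / ((tS x : ℝ) + m - 1)
    = (∑ i, (x i : ℝ) ^ 2 / lam i) * (((tS x : ℝ) + y) ^ 2
        / (4 * ((tS x : ℝ) + m - 1) ^ 2)) + ∑ i, lam i := by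
  have hd := (dpos hm (tS x)).ne'
  have hc := sum_cast x
  have h2 : ((tS x : ℝ) + y) * (tS x : ℝ) / ((tS x : ℝ) + m - 1)
      = ∑ i, ((tS x : ℝ) + y) * (x i : ℝ) / ((tS x : ℝ) + m - 1) := by
    rw [← Finset.sum_div, ← Finset.mul_sum, ← hc]
  have h3 : (∑ i, (x i : ℝ) ^ 2 / lam i)
        * (((tS x : ℝ) + y) ^ 2 / (4 * ((tS x : ℝ) + m - 1) ^ 2))
      = ∑ i, ((x i : ℝ) ^ 2 / lam i)
        * (((tS x : ℝ) + y) ^ 2 / (4 * ((tS x : ℝ) + m - 1) ^ 2)) := by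
    rw [Finset.sum_mul]
  rw [h2, h3, ← Finset.sum_add_distrib, ← Finset.sum_add_distrib]
  refine Finset.sum_congr rfl fun i _ => ?_
  unfold estHat
  rw [← hc]
  have hli := (hlam i).ne'
  field_simp
  ring


lemma ysum_GO (hm : 2 ≤ m) (hlam : ∀ i, 0 < lam i) (x : Fin m → ℕ) :
    ∑' y : ℕ, pp (∑ i, lam i) y *
        ENNReal.ofReal (((tS x : ℝ) + y + m - 1) * (tS x : ℝ) / ((tS x : ℝ) + m - 1))
      = ENNReal.ofReal (tS x : ℝ)
        + ENNReal.ofReal (∑ i, lam i) * ENNReal.ofReal ((tS x : ℝ) / ((tS x : ℝ) + m - 1)) := by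
  have hΛ := lamsum_pos hm hlam
  have hd := (dpos hm (tS x)).ne'
  have hpt : ∀ y : ℕ, ((tS x : ℝ) + y + m - 1) * (tS x : ℝ) / ((tS x : ℝ) + m - 1)
      = (tS x : ℝ) + ((tS x : ℝ) / ((tS x : ℝ) + m - 1)) * y + 0 * (y : ℝ) ^ 2 := by
    intro y; field_simp; ring
  rw [tsum_congr (fun y => by rw [hpt y])]
  rw [ysum_quad hΛ _ _ _ (by positivity) (div_nonneg (by positivity) (dpos hm (tS x)).le) le_rfl]
  simp

lemma ysum_HO (hm : 2 ≤ m) (hlam : ∀ i, 0 < lam i) (x : Fin m → ℕ) :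
    ∑' y : ℕ, pp (∑ i, lam i) y *
        ENNReal.ofReal ((∑ i, (x i : ℝ) ^ 2 / lam i) * (((tS x : ℝ) + y + m - 1) ^ 2
          / (4 * ((tS x : ℝ) + m - 1) ^ 2)) + ∑ i, lam i)
      = ENNReal.ofReal ((∑ i, (x i : ℝ) ^ 2 / lam i) * (1/4) + ∑ i, lam i)
        + ENNReal.ofReal (∑ i, lam i) *
            ENNReal.ofReal ((∑ i, (x i : ℝ) ^ 2 / lam i) * (1 / (2 * ((tS x : ℝ) + m - 1))))
        + (ENNReal.ofReal (∑ i, lam i) * ENNReal.ofReal (∑ i, lam i)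
            + ENNReal.ofReal (∑ i, lam i)) *
            ENNReal.ofReal ((∑ i, (x i : ℝ) ^ 2 / lam i) * (1 / (4 * ((tS x : ℝ) + m - 1) ^ 2))) := by
  have hΛ := lamsum_pos hm hlam
  have hd := (dpos hm (tS x)).ne'
  have hQ : 0 ≤ ∑ i, (x i : ℝ) ^ 2 / lam i :=
    Finset.sum_nonneg fun i _ => div_nonneg (by positivity) (hlam i).le
  have hd2 : (0:ℝ) < (tS x : ℝ) + m - 1 := dpos hm (tS x)
  have hpt : ∀ y : ℕ, (∑ i, (x i : ℝ) ^ 2 / lam i) * (((tS x : ℝ) + y + m - 1) ^ 2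
        / (4 * ((tS x : ℝ) + m - 1) ^ 2)) + (∑ i, lam i)
      = ((∑ i, (x i : ℝ) ^ 2 / lam i) * (1/4) + ∑ i, lam i)
        + ((∑ i, (x i : ℝ) ^ 2 / lam i) * (1 / (2 * ((tS x : ℝ) + m - 1)))) * y
        + ((∑ i, (x i : ℝ) ^ 2 / lam i) * (1 / (4 * ((tS x : ℝ) + m - 1) ^ 2))) * (y : ℝ) ^ 2 := by
    intro y; field_simp; ring
  rw [tsum_congr (fun y => by rw [hpt y])]
  exact ysum_quad hΛ _ _ _ (by positivity)
    (mul_nonneg hQ (by positivity)) (mul_nonneg hQ (by positivity))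

lemma ysum_GH (hm : 2 ≤ m) (hlam : ∀ i, 0 < lam i) (x : Fin m → ℕ) :
    ∑' y : ℕ, pp (∑ i, lam i) y *
        ENNReal.ofReal (((tS x : ℝ) + y) * (tS x : ℝ) / ((tS x : ℝ) + m - 1))
      = ENNReal.ofReal ((tS x : ℝ) * ((tS x : ℝ) / ((tS x : ℝ) + m - 1)))
        + ENNReal.ofReal (∑ i, lam i) * ENNReal.ofReal ((tS x : ℝ) / ((tS x : ℝ) + m - 1)) := by
  have hΛ := lamsum_pos hm hlam
  have hd := (dpos hm (tS x)).ne'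
  have hd2 : (0:ℝ) < (tS x : ℝ) + m - 1 := dpos hm (tS x)
  have hpt : ∀ y : ℕ, ((tS x : ℝ) + y) * (tS x : ℝ) / ((tS x : ℝ) + m - 1)
      = ((tS x : ℝ) * ((tS x : ℝ) / ((tS x : ℝ) + m - 1)))
        + ((tS x : ℝ) / ((tS x : ℝ) + m - 1)) * y + 0 * (y : ℝ) ^ 2 := by
    intro y; field_simp; ring
  rw [tsum_congr (fun y => by rw [hpt y])]
  rw [ysum_quad hΛ _ _ _ (mul_nonneg (by positivity) (div_nonneg (by positivity) hd2.le))
    (div_nonneg (by positivity) hd2.le) le_rfl]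
  simp

lemma ysum_HH (hm : 2 ≤ m) (hlam : ∀ i, 0 < lam i) (x : Fin m → ℕ) :
    ∑' y : ℕ, pp (∑ i, lam i) y *
        ENNReal.ofReal ((∑ i, (x i : ℝ) ^ 2 / lam i) * (((tS x : ℝ) + y) ^ 2
          / (4 * ((tS x : ℝ) + m - 1) ^ 2)) + ∑ i, lam i)
      = ENNReal.ofReal ((∑ i, (x i : ℝ) ^ 2 / lam i) *
            ((tS x : ℝ) ^ 2 / (4 * ((tS x : ℝ) + m - 1) ^ 2)) + ∑ i, lam i)
        + ENNReal.ofReal (∑ i, lam i) *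
            ENNReal.ofReal ((∑ i, (x i : ℝ) ^ 2 / lam i) *
              ((tS x : ℝ) / (2 * ((tS x : ℝ) + m - 1) ^ 2)))
        + (ENNReal.ofReal (∑ i, lam i) * ENNReal.ofReal (∑ i, lam i)
            + ENNReal.ofReal (∑ i, lam i)) *
            ENNReal.ofReal ((∑ i, (x i : ℝ) ^ 2 / lam i) * (1 / (4 * ((tS x : ℝ) + m - 1) ^ 2))) := by
  have hΛ := lamsum_pos hm hlam
  have hd := (dpos hm (tS x)).ne'
  have hQ : 0 ≤ ∑ i, (x i : ℝ) ^ 2 / lam i :=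
    Finset.sum_nonneg fun i _ => div_nonneg (by positivity) (hlam i).le
  have hd2 : (0:ℝ) < (tS x : ℝ) + m - 1 := dpos hm (tS x)
  have hpt : ∀ y : ℕ, (∑ i, (x i : ℝ) ^ 2 / lam i) * (((tS x : ℝ) + y) ^ 2
        / (4 * ((tS x : ℝ) + m - 1) ^ 2)) + (∑ i, lam i)
      = ((∑ i, (x i : ℝ) ^ 2 / lam i) * ((tS x : ℝ) ^ 2 / (4 * ((tS x : ℝ) + m - 1) ^ 2))
          + ∑ i, lam i)
        + ((∑ i, (x i : ℝ) ^ 2 / lam i) * ((tS x : ℝ) / (2 * ((tS x : ℝ) + m - 1) ^ 2))) * y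
        + ((∑ i, (x i : ℝ) ^ 2 / lam i) * (1 / (4 * ((tS x : ℝ) + m - 1) ^ 2))) * (y : ℝ) ^ 2 := by
    intro y; field_simp; ring
  rw [tsum_congr (fun y => by rw [hpt y])]
  refine ysum_quad hΛ _ _ _ ?_ ?_ ?_
  · positivity
  · exact mul_nonneg hQ (div_nonneg (by positivity) (by positivity))
  · exact mul_nonneg hQ (by positivity)


/-- Named expectation quantities. -/
noncomputable def e0 (lam : Fin m → ℝ) : ℝ≥0∞ := Ex lam (fun n => 1 / ((n : ℝ) + m - 1))
noncomputable def e1 (lam : Fin m → ℝ) : ℝ≥0∞ := Ex lam (fun n => 1 / ((n : ℝ) + m))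
noncomputable def p1 (lam : Fin m → ℝ) : ℝ≥0∞ := Ex lam (fun n => ((n : ℝ) + 1) / ((n : ℝ) + m))
noncomputable def p2 (lam : Fin m → ℝ) : ℝ≥0∞ :=
  Ex lam (fun n => ((n : ℝ) + 1) ^ 2 / ((n : ℝ) + m))
noncomputable def rr (lam : Fin m → ℝ) : ℝ≥0∞ := Ex lam (fun n => (n : ℝ) / ((n : ℝ) + m - 1))
noncomputable def LamE (lam : Fin m → ℝ) : ℝ≥0∞ := ENNReal.ofReal (∑ i, lam i)

lemma xsum_T (hlam : ∀ i, 0 < lam i) : Ex lam (fun n => (n : ℝ)) = LamE lam := by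
  unfold LamE
  have h := Ex_shift lam hlam (fun _ => 1) (fun _ => zero_le_one)
  rw [Ex_const lam hlam 1, ENNReal.ofReal_one, mul_one] at h
  rw [← h]
  exact Ex_congr lam fun n => by ring

lemma xsum_r (hm : 2 ≤ m) (hlam : ∀ i, 0 < lam i) : rr lam = LamE lam * e1 lam := by
  have h := Ex_shift lam hlam (fun n => 1 / ((n : ℝ) + m - 1))
    (fun n => div_nonneg zero_le_one (dpos hm n).le)
  unfold rr e1 LamE
  rw [show Ex lam (fun n => (n:ℝ) / ((n:ℝ) + m - 1))
      = Ex lam (fun n => (n:ℝ) * (1 / ((n:ℝ) + m - 1))) from Ex_congr lam fun n => by ring, h]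
  congr 1
  exact Ex_congr lam fun n => by push_cast; ring_nf

lemma xsum_T2d (hm : 2 ≤ m) (hlam : ∀ i, 0 < lam i) :
    Ex lam (fun n => (n : ℝ) * ((n : ℝ) / ((n : ℝ) + m - 1))) = LamE lam * p1 lam := by
  have h := Ex_shift lam hlam (fun n => (n : ℝ) / ((n : ℝ) + m - 1))
    (fun n => div_nonneg (by positivity) (dpos hm n).le)
  unfold LamE p1
  rw [h]
  congr 1
  exact Ex_congr lam fun n => by push_cast; ring_nf

lemma xsum_Q1 (hm : 2 ≤ m) (hlam : ∀ i, 0 < lam i) :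
    (∑' x : Fin m → ℕ, W lam x *
      ENNReal.ofReal ((∑ i, (x i : ℝ) ^ 2 / lam i) * (1/4) + ∑ i, lam i))
    = ENNReal.ofReal (1/4) * (LamE lam + ENNReal.ofReal m) + LamE lam := by
  have hΛ := (lamsum_pos hm hlam).le
  have hsplit : ∀ x : Fin m → ℕ,
      W lam x * ENNReal.ofReal ((∑ i, (x i : ℝ) ^ 2 / lam i) * (1/4) + ∑ i, lam i)
      = W lam x * ENNReal.ofReal ((∑ i, (x i : ℝ) ^ 2 / lam i) * (1/4))
        + W lam x * ENNReal.ofReal (∑ i, lam i) := by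
    intro x
    have hQ : 0 ≤ ∑ i, (x i : ℝ) ^ 2 / lam i :=
      Finset.sum_nonneg fun i _ => div_nonneg (by positivity) (hlam i).le
    rw [← mul_add, ← ENNReal.ofReal_add (by positivity) hΛ]
  rw [tsum_congr hsplit, ENNReal.tsum_add,
    Ex_Q lam hlam (fun _ => 1/4) (fun _ => by norm_num)]
  have h2 : (∑' x : Fin m → ℕ, W lam x * ENNReal.ofReal (∑ i, lam i)) = LamE lam := by
    rw [ENNReal.tsum_mul_right, W_mass lam hlam, one_mul]; rfl
  rw [h2]
  congr 1
  rw [show (fun n : ℕ => ((n : ℝ) + m) * (1/4)) = (fun n : ℕ => (1/4) * ((n:ℝ) + m)) from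
    funext fun n => by ring, Ex_smul lam (1/4) (by norm_num)]
  congr 1
  rw [Ex_add lam (fun n => (n:ℝ)) (fun _ => (m:ℝ)) (fun n => by positivity)
    (fun _ => by positivity), xsum_T hlam, Ex_const lam hlam, ENNReal.ofReal_natCast]

lemma xsum_Q2 (hm : 2 ≤ m) (hlam : ∀ i, 0 < lam i) :
    (∑' x : Fin m → ℕ, W lam x *
      ENNReal.ofReal ((∑ i, (x i : ℝ) ^ 2 / lam i) * (1 / (2 * ((tS x : ℝ) + m - 1)))))
    = ENNReal.ofReal (1/2) := by
  rw [Ex_Q lam hlam (fun n => 1 / (2 * ((n:ℝ) + m - 1)))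
    (fun n => by have := dpos hm n; positivity)]
  rw [show (fun n : ℕ => ((n:ℝ) + m) * (1 / (2 * (((n + 1 : ℕ):ℝ) + m - 1))))
      = (fun _ : ℕ => (1/2 : ℝ)) from funext fun n => by
    have h := (dpos' hm n).ne'
    push_cast
    rw [show ((n:ℝ) + 1 + m - 1 : ℝ) = (n:ℝ) + m by ring]
    field_simp]
  exact Ex_const lam hlam _

lemma xsum_Q3 (hm : 2 ≤ m) (hlam : ∀ i, 0 < lam i) :
    (∑' x : Fin m → ℕ, W lam x *
      ENNReal.ofReal ((∑ i, (x i : ℝ) ^ 2 / lam i) * (1 / (4 * ((tS x : ℝ) + m - 1) ^ 2))))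
    = ENNReal.ofReal (1/4) * e1 lam := by
  rw [Ex_Q lam hlam (fun n => 1 / (4 * ((n:ℝ) + m - 1) ^ 2))
    (fun n => by have := dpos hm n; positivity)]
  rw [show (fun n : ℕ => ((n:ℝ) + m) * (1 / (4 * (((n + 1 : ℕ):ℝ) + m - 1) ^ 2)))
      = (fun n : ℕ => (1/4 : ℝ) * (1 / ((n:ℝ) + m))) from funext fun n => by
    have h := (dpos' hm n).ne'
    push_cast
    rw [show ((n:ℝ) + 1 + m - 1 : ℝ) = (n:ℝ) + m by ring]
    field_simp]
  rw [Ex_smul lam (1/4) (by norm_num)]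
  rfl

lemma xsum_Q4 (hm : 2 ≤ m) (hlam : ∀ i, 0 < lam i) :
    (∑' x : Fin m → ℕ, W lam x *
      ENNReal.ofReal ((∑ i, (x i : ℝ) ^ 2 / lam i) *
        ((tS x : ℝ) ^ 2 / (4 * ((tS x : ℝ) + m - 1) ^ 2)) + ∑ i, lam i))
    = ENNReal.ofReal (1/4) * p2 lam + LamE lam := by
  have hΛ := (lamsum_pos hm hlam).le
  have hsplit : ∀ x : Fin m → ℕ,
      W lam x * ENNReal.ofReal ((∑ i, (x i : ℝ) ^ 2 / lam i) *
        ((tS x : ℝ) ^ 2 / (4 * ((tS x : ℝ) + m - 1) ^ 2)) + ∑ i, lam i)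
      = W lam x * ENNReal.ofReal ((∑ i, (x i : ℝ) ^ 2 / lam i) *
          ((tS x : ℝ) ^ 2 / (4 * ((tS x : ℝ) + m - 1) ^ 2)))
        + W lam x * ENNReal.ofReal (∑ i, lam i) := by
    intro x
    have hQ : 0 ≤ ∑ i, (x i : ℝ) ^ 2 / lam i :=
      Finset.sum_nonneg fun i _ => div_nonneg (by positivity) (hlam i).le
    have hd := dpos hm (tS x)
    rw [← mul_add, ← ENNReal.ofReal_add (mul_nonneg hQ (by positivity)) hΛ]
  rw [tsum_congr hsplit, ENNReal.tsum_add,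
    Ex_Q lam hlam (fun n => (n:ℝ) ^ 2 / (4 * ((n:ℝ) + m - 1) ^ 2))
      (fun n => by have := dpos hm n; positivity)]
  have h2 : (∑' x : Fin m → ℕ, W lam x * ENNReal.ofReal (∑ i, lam i)) = LamE lam := by
    rw [ENNReal.tsum_mul_right, W_mass lam hlam, one_mul]; rfl
  rw [h2]
  congr 1
  rw [show (fun n : ℕ => ((n:ℝ) + m) * (((n + 1 : ℕ):ℝ) ^ 2 / (4 * (((n + 1 : ℕ):ℝ) + m - 1) ^ 2)))
      = (fun n : ℕ => (1/4 : ℝ) * (((n:ℝ) + 1) ^ 2 / ((n:ℝ) + m))) from funext fun n => by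
    have h := (dpos' hm n).ne'
    push_cast
    rw [show ((n:ℝ) + 1 + m - 1 : ℝ) = (n:ℝ) + m by ring]
    field_simp]
  rw [Ex_smul lam (1/4) (by norm_num)]
  rfl

lemma xsum_Q5 (hm : 2 ≤ m) (hlam : ∀ i, 0 < lam i) :
    (∑' x : Fin m → ℕ, W lam x *
      ENNReal.ofReal ((∑ i, (x i : ℝ) ^ 2 / lam i) *
        ((tS x : ℝ) / (2 * ((tS x : ℝ) + m - 1) ^ 2))))
    = ENNReal.ofReal (1/2) * p1 lam := by
  rw [Ex_Q lam hlam (fun n => (n:ℝ) / (2 * ((n:ℝ) + m - 1) ^ 2))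
    (fun n => by have := dpos hm n; positivity)]
  rw [show (fun n : ℕ => ((n:ℝ) + m) * (((n + 1 : ℕ):ℝ) / (2 * (((n + 1 : ℕ):ℝ) + m - 1) ^ 2)))
      = (fun n : ℕ => (1/2 : ℝ) * (((n:ℝ) + 1) / ((n:ℝ) + m))) from funext fun n => by
    have h := (dpos' hm n).ne'
    push_cast
    rw [show ((n:ℝ) + 1 + m - 1 : ℝ) = (n:ℝ) + m by ring]
    field_simp]
  rw [Ex_smul lam (1/2) (by norm_num)]
  rfl


lemma riskO_eq (hm : 2 ≤ m) (hlam : ∀ i, 0 < lam i) :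
    risk m (estO m) lam + (LamE lam + LamE lam * rr lam)
      = (ENNReal.ofReal (1/4) * (LamE lam + ENNReal.ofReal m) + LamE lam)
        + LamE lam * ENNReal.ofReal (1/2)
        + (LamE lam * LamE lam + LamE lam) * (ENNReal.ofReal (1/4) * e1 lam) := by
  have hsplit := risk_split hm hlam (estO m)
    (fun x y => ((tS x : ℝ) + y + m - 1) * (tS x : ℝ) / ((tS x : ℝ) + m - 1))
    (fun x y => (∑ i, (x i : ℝ) ^ 2 / lam i) *
      (((tS x : ℝ) + y + m - 1) ^ 2 / (4 * ((tS x : ℝ) + m - 1) ^ 2)) + ∑ i, lam i)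
    (fun x y => by
      have hd := dpos hm (tS x)
      have hy : (0:ℝ) ≤ (y:ℝ) := by positivity
      have h1 : (0:ℝ) ≤ (tS x : ℝ) + y + m - 1 := by linarith
      exact div_nonneg (mul_nonneg h1 (by positivity)) hd.le)
    (fun x y => estO_identity hm hlam x y)
  have hGsum : (∑' x : Fin m → ℕ, W lam x * ∑' y : ℕ, pp (∑ i, lam i) y *
        ENNReal.ofReal (((tS x : ℝ) + y + m - 1) * (tS x : ℝ) / ((tS x : ℝ) + m - 1)))
      = LamE lam + LamE lam * rr lam := by
    calc (∑' x : Fin m → ℕ, W lam x * ∑' y : ℕ, pp (∑ i, lam i) y *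
        ENNReal.ofReal (((tS x : ℝ) + y + m - 1) * (tS x : ℝ) / ((tS x : ℝ) + m - 1)))
        = ∑' x : Fin m → ℕ, (W lam x * ENNReal.ofReal (tS x : ℝ)
            + LamE lam * (W lam x * ENNReal.ofReal ((tS x : ℝ) / ((tS x : ℝ) + m - 1)))) := by
          refine tsum_congr fun x => ?_
          rw [ysum_GO hm hlam x, mul_add]
          congr 1
          unfold LamE
          ring
      _ = LamE lam + LamE lam * rr lam := by
          rw [ENNReal.tsum_add, ENNReal.tsum_mul_left]
          congr 1
          exact xsum_T hlam
  have hHsum : (∑' x : Fin m → ℕ, W lam x * ∑' y : ℕ, pp (∑ i, lam i) y *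
        ENNReal.ofReal ((∑ i, (x i : ℝ) ^ 2 / lam i) *
          (((tS x : ℝ) + y + m - 1) ^ 2 / (4 * ((tS x : ℝ) + m - 1) ^ 2)) + ∑ i, lam i))
      = (ENNReal.ofReal (1/4) * (LamE lam + ENNReal.ofReal m) + LamE lam)
        + LamE lam * ENNReal.ofReal (1/2)
        + (LamE lam * LamE lam + LamE lam) * (ENNReal.ofReal (1/4) * e1 lam) := by
    calc (∑' x : Fin m → ℕ, W lam x * ∑' y : ℕ, pp (∑ i, lam i) y *
        ENNReal.ofReal ((∑ i, (x i : ℝ) ^ 2 / lam i) *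
          (((tS x : ℝ) + y + m - 1) ^ 2 / (4 * ((tS x : ℝ) + m - 1) ^ 2)) + ∑ i, lam i))
        = ∑' x : Fin m → ℕ,
            (W lam x * ENNReal.ofReal ((∑ i, (x i : ℝ) ^ 2 / lam i) * (1/4) + ∑ i, lam i)
            + LamE lam * (W lam x * ENNReal.ofReal ((∑ i, (x i : ℝ) ^ 2 / lam i) *
                (1 / (2 * ((tS x : ℝ) + m - 1)))))
            + (LamE lam * LamE lam + LamE lam) * (W lam x *
                ENNReal.ofReal ((∑ i, (x i : ℝ) ^ 2 / lam i) *
                  (1 / (4 * ((tS x : ℝ) + m - 1) ^ 2))))) := by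
          refine tsum_congr fun x => ?_
          rw [ysum_HO hm hlam x]
          unfold LamE
          ring
      _ = (ENNReal.ofReal (1/4) * (LamE lam + ENNReal.ofReal m) + LamE lam)
          + LamE lam * ENNReal.ofReal (1/2)
          + (LamE lam * LamE lam + LamE lam) * (ENNReal.ofReal (1/4) * e1 lam) := by
          rw [ENNReal.tsum_add, ENNReal.tsum_add, ENNReal.tsum_mul_left, ENNReal.tsum_mul_left,
            xsum_Q1 hm hlam, xsum_Q2 hm hlam, xsum_Q3 hm hlam]
  rw [hGsum, hHsum] at hsplit
  exact hsplit

lemma riskH_eq (hm : 2 ≤ m) (hlam : ∀ i, 0 < lam i) :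
    risk m (estHat m) lam + (LamE lam * p1 lam + LamE lam * rr lam)
      = (ENNReal.ofReal (1/4) * p2 lam + LamE lam)
        + LamE lam * (ENNReal.ofReal (1/2) * p1 lam)
        + (LamE lam * LamE lam + LamE lam) * (ENNReal.ofReal (1/4) * e1 lam) := by
  have hsplit := risk_split hm hlam (estHat m)
    (fun x y => ((tS x : ℝ) + y) * (tS x : ℝ) / ((tS x : ℝ) + m - 1))
    (fun x y => (∑ i, (x i : ℝ) ^ 2 / lam i) *
      (((tS x : ℝ) + y) ^ 2 / (4 * ((tS x : ℝ) + m - 1) ^ 2)) + ∑ i, lam i)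
    (fun x y => by
      have hd := dpos hm (tS x)
      exact div_nonneg (mul_nonneg (by positivity) (by positivity)) hd.le)
    (fun x y => estHat_identity hm hlam x y)
  have hGsum : (∑' x : Fin m → ℕ, W lam x * ∑' y : ℕ, pp (∑ i, lam i) y *
        ENNReal.ofReal (((tS x : ℝ) + y) * (tS x : ℝ) / ((tS x : ℝ) + m - 1)))
      = LamE lam * p1 lam + LamE lam * rr lam := by
    calc (∑' x : Fin m → ℕ, W lam x * ∑' y : ℕ, pp (∑ i, lam i) y *
        ENNReal.ofReal (((tS x : ℝ) + y) * (tS x : ℝ) / ((tS x : ℝ) + m - 1)))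
        = ∑' x : Fin m → ℕ,
            (W lam x * ENNReal.ofReal ((tS x : ℝ) * ((tS x : ℝ) / ((tS x : ℝ) + m - 1)))
            + LamE lam * (W lam x * ENNReal.ofReal ((tS x : ℝ) / ((tS x : ℝ) + m - 1)))) := by
          refine tsum_congr fun x => ?_
          rw [ysum_GH hm hlam x, mul_add]
          congr 1
          unfold LamE
          ring
      _ = LamE lam * p1 lam + LamE lam * rr lam := by
          rw [ENNReal.tsum_add, ENNReal.tsum_mul_left]
          congr 1
          exact xsum_T2d hm hlam
  have hHsum : (∑' x : Fin m → ℕ, W lam x * ∑' y : ℕ, pp (∑ i, lam i) y *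
        ENNReal.ofReal ((∑ i, (x i : ℝ) ^ 2 / lam i) *
          (((tS x : ℝ) + y) ^ 2 / (4 * ((tS x : ℝ) + m - 1) ^ 2)) + ∑ i, lam i))
      = (ENNReal.ofReal (1/4) * p2 lam + LamE lam)
        + LamE lam * (ENNReal.ofReal (1/2) * p1 lam)
        + (LamE lam * LamE lam + LamE lam) * (ENNReal.ofReal (1/4) * e1 lam) := by
    calc (∑' x : Fin m → ℕ, W lam x * ∑' y : ℕ, pp (∑ i, lam i) y *
        ENNReal.ofReal ((∑ i, (x i : ℝ) ^ 2 / lam i) *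
          (((tS x : ℝ) + y) ^ 2 / (4 * ((tS x : ℝ) + m - 1) ^ 2)) + ∑ i, lam i))
        = ∑' x : Fin m → ℕ,
            (W lam x * ENNReal.ofReal ((∑ i, (x i : ℝ) ^ 2 / lam i) *
                ((tS x : ℝ) ^ 2 / (4 * ((tS x : ℝ) + m - 1) ^ 2)) + ∑ i, lam i)
            + LamE lam * (W lam x * ENNReal.ofReal ((∑ i, (x i : ℝ) ^ 2 / lam i) *
                ((tS x : ℝ) / (2 * ((tS x : ℝ) + m - 1) ^ 2))))
            + (LamE lam * LamE lam + LamE lam) * (W lam x *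
                ENNReal.ofReal ((∑ i, (x i : ℝ) ^ 2 / lam i) *
                  (1 / (4 * ((tS x : ℝ) + m - 1) ^ 2))))) := by
          refine tsum_congr fun x => ?_
          rw [ysum_HH hm hlam x]
          unfold LamE
          ring
      _ = (ENNReal.ofReal (1/4) * p2 lam + LamE lam)
          + LamE lam * (ENNReal.ofReal (1/2) * p1 lam)
          + (LamE lam * LamE lam + LamE lam) * (ENNReal.ofReal (1/4) * e1 lam) := by
          rw [ENNReal.tsum_add, ENNReal.tsum_add, ENNReal.tsum_mul_left, ENNReal.tsum_mul_left,
            xsum_Q4 hm hlam, xsum_Q5 hm hlam, xsum_Q3 hm hlam]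
  rw [hGsum, hHsum] at hsplit
  exact hsplit


lemma id_p2 (hm : 2 ≤ m) (hlam : ∀ i, 0 < lam i) :
    p2 lam + ENNReal.ofReal m
      = LamE lam + ENNReal.ofReal 2 + ENNReal.ofReal (((m:ℝ) - 1) ^ 2) * e1 lam := by
  have hm1 : (0:ℝ) ≤ (m:ℝ) - 1 := by
    have : (2:ℝ) ≤ m := by exact_mod_cast hm
    linarith
  unfold p2 e1
  rw [← Ex_const lam hlam (m : ℝ),
    ← Ex_add lam _ _ (fun n => div_nonneg (by positivity) (dpos' hm n).le) (fun _ => by positivity)]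
  rw [← Ex_smul lam _ (by positivity)]
  rw [← xsum_T hlam, ← Ex_const lam hlam 2]
  rw [← Ex_add lam (fun n => (n:ℝ)) _ (fun n => by positivity) (fun _ => by norm_num)]
  rw [← Ex_add lam _ _
    (fun n => by positivity)
    (fun n => mul_nonneg (by positivity) (div_nonneg zero_le_one (dpos' hm n).le))]
  refine Ex_congr lam fun n => ?_
  have h := (dpos' hm n).ne'
  field_simp
  ring

lemma id_p1 (hm : 2 ≤ m) (hlam : ∀ i, 0 < lam i) :
    p1 lam + ENNReal.ofReal ((m:ℝ) - 1) * e1 lam = 1 := by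
  have hm1 : (0:ℝ) ≤ (m:ℝ) - 1 := by
    have : (2:ℝ) ≤ m := by exact_mod_cast hm
    linarith
  unfold p1 e1
  rw [← Ex_smul lam _ hm1,
    ← Ex_add lam _ _ (fun n => div_nonneg (by positivity) (dpos' hm n).le)
      (fun n => mul_nonneg hm1 (div_nonneg zero_le_one (dpos' hm n).le))]
  rw [show (1 : ℝ≥0∞) = ENNReal.ofReal 1 by simp, ← Ex_const lam hlam 1]
  refine Ex_congr lam fun n => ?_
  have h := (dpos' hm n).ne'
  field_simp
  ring

lemma id_rr (hm : 2 ≤ m) (hlam : ∀ i, 0 < lam i) :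
    rr lam + ENNReal.ofReal ((m:ℝ) - 1) * e0 lam = 1 := by
  have hm1 : (0:ℝ) ≤ (m:ℝ) - 1 := by
    have : (2:ℝ) ≤ m := by exact_mod_cast hm
    linarith
  unfold rr e0
  rw [← Ex_smul lam _ hm1,
    ← Ex_add lam _ _ (fun n => div_nonneg (by positivity) (dpos hm n).le)
      (fun n => mul_nonneg hm1 (div_nonneg zero_le_one (dpos hm n).le))]
  rw [show (1 : ℝ≥0∞) = ENNReal.ofReal 1 by simp, ← Ex_const lam hlam 1]
  refine Ex_congr lam fun n => ?_
  have h := (dpos hm n).ne'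
  field_simp
  ring

lemma e1_le_e0 (hm : 2 ≤ m) : e1 lam ≤ e0 lam := by
  unfold e1 e0
  refine Ex_mono lam fun n => ?_
  have h1 := dpos hm n
  have h2 := dpos' hm n
  rw [div_le_div_iff₀ h2 h1]
  linarith

lemma e0_pos (hm : 2 ≤ m) (hlam : ∀ i, 0 < lam i) : 0 < e0 lam := by
  have hx : (0:ℝ≥0∞) < W lam (fun _ => 0) * ENNReal.ofReal (1 / (((tS (fun _ : Fin m => 0)) : ℝ) + m - 1)) := by
    refine ENNReal.mul_pos (W_pos lam hlam _).ne' ?_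
    refine (ENNReal.ofReal_pos.2 ?_).ne'
    exact div_pos one_pos (dpos hm _)
  exact hx.trans_le (ENNReal.le_tsum _)

lemma e0_ne_top (hm : 2 ≤ m) (hlam : ∀ i, 0 < lam i) : e0 lam ≠ ⊤ := by
  refine Ex_ne_top_of_le lam hlam (c := 1) fun n => ?_
  have h1 := dpos hm n
  rw [div_le_one h1]
  have : (2:ℝ) ≤ m := by exact_mod_cast hm
  have := Nat.cast_nonneg (α := ℝ) n
  linarith

lemma e1_ne_top (hm : 2 ≤ m) (hlam : ∀ i, 0 < lam i) : e1 lam ≠ ⊤ :=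
  fun h => e0_ne_top hm hlam (top_le_iff.1 (h ▸ e1_le_e0 hm))

lemma p1_ne_top (hm : 2 ≤ m) (hlam : ∀ i, 0 < lam i) : p1 lam ≠ ⊤ := by
  refine Ex_ne_top_of_le lam hlam (c := 1) fun n => ?_
  have h1 := dpos' hm n
  rw [div_le_one h1]
  have : (2:ℝ) ≤ m := by exact_mod_cast hm
  linarith

lemma rr_ne_top (hm : 2 ≤ m) (hlam : ∀ i, 0 < lam i) : rr lam ≠ ⊤ := by
  refine Ex_ne_top_of_le lam hlam (c := 1) fun n => ?_
  have h1 := dpos hm n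
  rw [div_le_one h1]
  have : (2:ℝ) ≤ m := by exact_mod_cast hm
  linarith

lemma p2_ne_top (hm : 2 ≤ m) (hlam : ∀ i, 0 < lam i) : p2 lam ≠ ⊤ := by
  have h := id_p2 (lam := lam) hm hlam
  have : p2 lam ≤ LamE lam + ENNReal.ofReal 2 + ENNReal.ofReal (((m:ℝ) - 1) ^ 2) * e1 lam := by
    rw [← h]; exact le_add_right le_rfl
  refine (this.trans_lt ?_).ne
  have h1 : LamE lam + ENNReal.ofReal 2 ≠ ⊤ := by
    simp [LamE]
  have h2 : ENNReal.ofReal (((m:ℝ) - 1) ^ 2) * e1 lam ≠ ⊤ :=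
    ENNReal.mul_ne_top ENNReal.ofReal_ne_top (e1_ne_top hm hlam)
  exact ENNReal.add_lt_top.2 ⟨h1.lt_top, h2.lt_top⟩

lemma LamE_ne_top : LamE lam ≠ ⊤ := ENNReal.ofReal_ne_top

end Main

end Stmt3Aux


open Stmt3Aux in
/- STATEMENT 3: for m ≥ 2, λ̂ strictly dominates λ^O at every parameter point. -/
theorem stmt_3 (m : ℕ) (hm : 2 ≤ m) (lam : Fin m → ℝ) (hlam : ∀ i, 0 < lam i) :
    risk m (estHat m) lam < risk m (estO m) lam := by
  have hΛpos := lamsum_pos (lam := lam) hm hlam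
  have hO := riskO_eq (lam := lam) hm hlam
  have hH := riskH_eq (lam := lam) hm hlam
  have hAt : LamE lam ≠ ⊤ := ENNReal.ofReal_ne_top
  have hE0t := e0_ne_top (lam := lam) hm hlam
  have hE1t := e1_ne_top (lam := lam) hm hlam
  have hP1t := p1_ne_top (lam := lam) hm hlam
  have hP2t := p2_ne_top (lam := lam) hm hlam
  have hRt := rr_ne_top (lam := lam) hm hlam
  have hRHSOt : (ENNReal.ofReal (1/4) * (LamE lam + ENNReal.ofReal m) + LamE lam)
      + LamE lam * ENNReal.ofReal (1/2)
      + (LamE lam * LamE lam + LamE lam) * (ENNReal.ofReal (1/4) * e1 lam) ≠ ⊤ := by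
    finiteness
  have hRHSHt : (ENNReal.ofReal (1/4) * p2 lam + LamE lam)
      + LamE lam * (ENNReal.ofReal (1/2) * p1 lam)
      + (LamE lam * LamE lam + LamE lam) * (ENNReal.ofReal (1/4) * e1 lam) ≠ ⊤ := by
    finiteness
  have hrOt : risk m (estO m) lam ≠ ⊤ := by
    refine ne_top_of_le_ne_top hRHSOt ?_
    rw [← hO]; exact le_self_add
  have hrHt : risk m (estHat m) lam ≠ ⊤ := by
    refine ne_top_of_le_ne_top hRHSHt ?_
    rw [← hH]; exact le_self_add
  -- real-valued quantities
  set a : ℝ := ∑ i, lam i with ha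
  have hAr : (LamE lam).toReal = a := ENNReal.toReal_ofReal hΛpos.le
  have h14 : (ENNReal.ofReal (1/4 : ℝ)).toReal = 1/4 := ENNReal.toReal_ofReal (by norm_num)
  have h12 : (ENNReal.ofReal (1/2 : ℝ)).toReal = 1/2 := ENNReal.toReal_ofReal (by norm_num)
  have hMr : (ENNReal.ofReal ((m : ℝ))).toReal = (m : ℝ) := ENNReal.toReal_ofReal (by positivity)
  have h2r : (ENNReal.ofReal (2 : ℝ)).toReal = 2 := ENNReal.toReal_ofReal (by norm_num)
  have hm1 : (1:ℝ) ≤ (m:ℝ) - 1 := by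
    have : (2:ℝ) ≤ m := by exact_mod_cast hm
    linarith
  have hM1r : (ENNReal.ofReal ((m : ℝ) - 1)).toReal = (m : ℝ) - 1 :=
    ENNReal.toReal_ofReal (by linarith)
  have hM2r : (ENNReal.ofReal (((m : ℝ) - 1) ^ 2)).toReal = ((m : ℝ) - 1) ^ 2 :=
    ENNReal.toReal_ofReal (by positivity)
  -- real equations
  have eqO := congrArg ENNReal.toReal hO
  repeat first
    | rw [ENNReal.toReal_mul] at eqO
    | rw [ENNReal.toReal_add (by finiteness) (by finiteness)] at eqO
  rw [hAr, h14, h12, hMr] at eqO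
  have eqH := congrArg ENNReal.toReal hH
  repeat first
    | rw [ENNReal.toReal_mul] at eqH
    | rw [ENNReal.toReal_add (by finiteness) (by finiteness)] at eqH
  rw [hAr, h14, h12] at eqH
  -- identities, real versions
  have i1 := congrArg ENNReal.toReal (id_p2 (lam := lam) hm hlam)
  repeat first
    | rw [ENNReal.toReal_mul] at i1
    | rw [ENNReal.toReal_add (by finiteness) (by finiteness)] at i1
  rw [hAr, h2r, hMr, hM2r] at i1
  have i2 := congrArg ENNReal.toReal (id_p1 (lam := lam) hm hlam)
  rw [ENNReal.toReal_add (by finiteness) (by finiteness), ENNReal.toReal_mul,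
      hM1r, ENNReal.toReal_one] at i2
  have i3 := congrArg ENNReal.toReal (id_rr (lam := lam) hm hlam)
  rw [ENNReal.toReal_add (by finiteness) (by finiteness), ENNReal.toReal_mul,
      hM1r, ENNReal.toReal_one] at i3
  have i4 := congrArg ENNReal.toReal (xsum_r (lam := lam) hm hlam)
  rw [ENNReal.toReal_mul, hAr] at i4
  have i5 : (e1 lam).toReal ≤ (e0 lam).toReal :=
    ENNReal.toReal_le_toReal hE1t hE0t |>.2 (e1_le_e0 hm)
  have i6 : 0 < (e0 lam).toReal :=
    ENNReal.toReal_pos (e0_pos (lam := lam) hm hlam).ne' hE0t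
  have hv0 : 0 ≤ (e1 lam).toReal := ENNReal.toReal_nonneg
  rw [← ENNReal.toReal_lt_toReal hrHt hrOt]
  nlinarith [mul_nonneg (sq_nonneg ((m:ℝ) - 1)) (sub_nonneg.mpr i5),
    mul_pos (pow_pos (by linarith : (0:ℝ) < (m:ℝ) - 1) 2) i6,
    sq_nonneg ((m:ℝ) - 1), hΛpos]
end

section
/- Suppose m = 1. Then sup_{λ ∈ (0,∞)} R(λ^O, λ) > 1/2; in fact there exists λ_1 > 0 with R(λ^O, (λ_1)) > 1/2 (the paper's computation shows this holds for every λ_1 > 1/3, since for m = 1 the risk equals 1/2 + ((3λ_1 − 1)/4)·e^{−λ_1}). -/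
open scoped BigOperators ENNReal

section Aux

lemma exp_tsum' (x : ℝ) : ∑' n : ℕ, x ^ n / (Nat.factorial n : ℝ) = Real.exp x := by
  rw [Real.exp_eq_exp_ℝ, NormedSpace.exp_eq_tsum_div]

lemma summable_pdf (x : ℝ) : Summable (fun n : ℕ => x ^ n / (Nat.factorial n : ℝ)) :=
  Real.summable_pow_div_factorial x

lemma shift1 (x : ℝ) :
    (fun n : ℕ => ((n : ℝ) + 1) * (x ^ (n + 1) / (Nat.factorial (n + 1) : ℝ)))
      = fun n : ℕ => x * (x ^ n / (Nat.factorial n : ℝ)) := by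
  funext n
  rw [Nat.factorial_succ]
  have h1 : ((n : ℝ) + 1) ≠ 0 := by positivity
  have h2 : ((Nat.factorial n : ℝ)) ≠ 0 := by
    exact_mod_cast n.factorial_ne_zero
  push_cast
  field_simp
  ring

lemma summable_n (x : ℝ) : Summable (fun n : ℕ => (n : ℝ) * (x ^ n / (Nat.factorial n : ℝ))) := by
  rw [← summable_nat_add_iff 1]
  simpa [shift1 x] using (summable_pdf x).mul_left x

lemma tsum_n (x : ℝ) : ∑' n : ℕ, (n : ℝ) * (x ^ n / (Nat.factorial n : ℝ)) = x * Real.exp x := by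
  rw [Summable.tsum_eq_zero_add (summable_n x)]
  simp only [Nat.cast_zero, zero_mul, zero_add, Nat.cast_add, Nat.cast_one]
  rw [shift1 x, tsum_mul_left, exp_tsum']

lemma shift2 (x : ℝ) :
    (fun n : ℕ => ((n : ℝ) + 1) ^ 2 * (x ^ (n + 1) / (Nat.factorial (n + 1) : ℝ)))
      = fun n : ℕ => x * ((n : ℝ) * (x ^ n / (Nat.factorial n : ℝ)) + x ^ n / (Nat.factorial n : ℝ)) := by
  funext n
  rw [Nat.factorial_succ]
  have h1 : ((n : ℝ) + 1) ≠ 0 := by positivity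
  have h2 : ((Nat.factorial n : ℝ)) ≠ 0 := by exact_mod_cast n.factorial_ne_zero
  push_cast
  field_simp
  ring

lemma summable_n2 (x : ℝ) : Summable (fun n : ℕ => (n : ℝ) ^ 2 * (x ^ n / (Nat.factorial n : ℝ))) := by
  rw [← summable_nat_add_iff 1]
  simpa [shift2 x] using ((summable_n x).add (summable_pdf x)).mul_left x

lemma tsum_n2 (x : ℝ) :
    ∑' n : ℕ, (n : ℝ) ^ 2 * (x ^ n / (Nat.factorial n : ℝ)) = (x + x ^ 2) * Real.exp x := by
  rw [Summable.tsum_eq_zero_add (summable_n2 x)]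
  simp only [Nat.cast_zero, zero_pow, zero_mul, zero_add, Nat.cast_add, Nat.cast_one, ne_eq,
    OfNat.ofNat_ne_zero, not_false_eq_true]
  rw [shift2 x, tsum_mul_left, Summable.tsum_add (summable_n x) (summable_pdf x), tsum_n, exp_tsum']
  ring

lemma pmf_eq (x : ℝ) (n : ℕ) : poissonPmf x n = Real.exp (-x) * (x ^ n / (Nat.factorial n : ℝ)) := by
  unfold poissonPmf; ring

lemma poly_pmf_eq (x a b c : ℝ) :
    (fun n : ℕ => (a + b * n + c * (n : ℝ) ^ 2) * poissonPmf x n)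
      = fun n : ℕ => Real.exp (-x) *
        (a * (x ^ n / (Nat.factorial n : ℝ)) + b * ((n : ℝ) * (x ^ n / (Nat.factorial n : ℝ)))
          + c * ((n : ℝ) ^ 2 * (x ^ n / (Nat.factorial n : ℝ)))) := by
  funext n; rw [pmf_eq]; ring

lemma summable_poly_pmf (x a b c : ℝ) :
    Summable (fun n : ℕ => (a + b * n + c * (n : ℝ) ^ 2) * poissonPmf x n) := by
  rw [poly_pmf_eq]
  exact ((((summable_pdf x).mul_left a).add ((summable_n x).mul_left b)).add
    ((summable_n2 x).mul_left c)).mul_left _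

lemma tsum_poly_pmf (x a b c : ℝ) :
    ∑' n : ℕ, (a + b * n + c * (n : ℝ) ^ 2) * poissonPmf x n
      = a + b * x + c * (x + x ^ 2) := by
  rw [poly_pmf_eq, tsum_mul_left,
    Summable.tsum_add (((summable_pdf x).mul_left a).add ((summable_n x).mul_left b))
      ((summable_n2 x).mul_left c),
    Summable.tsum_add ((summable_pdf x).mul_left a) ((summable_n x).mul_left b),
    tsum_mul_left, tsum_mul_left, tsum_mul_left, exp_tsum', tsum_n, tsum_n2]
  have h : Real.exp (-x) * Real.exp x = 1 := by
    rw [← Real.exp_add]; simp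
  linear_combination (a + b * x + c * (x + x ^ 2)) * h

noncomputable def Af (l : ℝ) (n : ℕ) : ℝ := ((n : ℝ) / (n : ℝ) * n / 2 - l) ^ 2 / l

noncomputable def Bf (l : ℝ) (n : ℕ) : ℝ :=
  ((n : ℝ) / (n : ℝ)) * ((n : ℝ) / (n : ℝ) * n / 2 - l) / l

noncomputable def Cf (l : ℝ) (n : ℕ) : ℝ := ((n : ℝ) / (n : ℝ)) ^ 2 / (4 * l)

noncomputable def Gf (l : ℝ) (n : ℕ) : ℝ := Af l n + Bf l n * l + Cf l n * (l + l ^ 2)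

noncomputable def termF (l : ℝ) (n y : ℕ) : ℝ :=
  ((((n : ℝ) + (y : ℝ)) / 2 * ((n : ℝ) / (n : ℝ)) - l) ^ 2 / l) *
    (poissonPmf l y * poissonPmf l n)

noncomputable def Df (l : ℝ) : ℝ := poissonPmf l 0 * (l - (l + l ^ 2) / (4 * l))

lemma termF_eq (l : ℝ) (n y : ℕ) :
    termF l n y
      = ((Af l n + Bf l n * y + Cf l n * (y : ℝ) ^ 2) * poissonPmf l y) * poissonPmf l n := by
  unfold termF Af Bf Cf
  ring

lemma summable_termF (l : ℝ) (n : ℕ) : Summable (fun y : ℕ => termF l n y) := by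
  simp only [termF_eq]
  exact (summable_poly_pmf l _ _ _).mul_right _

lemma tsum_termF (l : ℝ) (n : ℕ) : ∑' y : ℕ, termF l n y = Gf l n * poissonPmf l n := by
  simp only [termF_eq]
  rw [tsum_mul_right, tsum_poly_pmf]
  rfl

lemma Gf_decomp (l : ℝ) (hl : l ≠ 0) (n : ℕ) :
    Gf l n * poissonPmf l n
      = ((l + l ^ 2) / (4 * l) + (-(1 : ℝ) / 2) * n + (1 / (4 * l)) * (n : ℝ) ^ 2)
          * poissonPmf l n
        + (if n = 0 then Df l else 0) := by
  cases n with
  | zero =>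
      simp only [if_pos rfl]
      unfold Gf Af Bf Cf Df
      simp only [Nat.cast_zero, div_zero, CharP.cast_eq_zero, ite_true]
      field_simp
      ring
  | succ k =>
      have hne : ((k : ℝ) + 1) ≠ 0 := by positivity
      have hd : ((k + 1 : ℕ) : ℝ) / ((k + 1 : ℕ) : ℝ) = 1 := by
        rw [div_self]
        push_cast
        exact hne
      simp only [if_neg (Nat.succ_ne_zero k)]
      unfold Gf Af Bf Cf
      rw [hd]
      push_cast
      field_simp
      ring

lemma summable_G (l : ℝ) (hl : l ≠ 0) : Summable (fun n : ℕ => Gf l n * poissonPmf l n) := by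
  have h : (fun n : ℕ => Gf l n * poissonPmf l n)
      = fun n : ℕ =>
        ((l + l ^ 2) / (4 * l) + (-(1 : ℝ) / 2) * n + (1 / (4 * l)) * (n : ℝ) ^ 2)
          * poissonPmf l n + (if n = 0 then Df l else 0) := funext (Gf_decomp l hl)
  rw [h]
  exact (summable_poly_pmf l _ _ _).add ((hasSum_ite_eq 0 (Df l)).summable)

lemma tsum_G (l : ℝ) (hl : 0 < l) :
    ∑' n : ℕ, Gf l n * poissonPmf l n = 1 / 2 + (3 * l - 1) / 4 * Real.exp (-l) := by
  have hne : l ≠ 0 := ne_of_gt hl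
  rw [funext (Gf_decomp l hne),
    Summable.tsum_add (summable_poly_pmf l _ _ _) ((hasSum_ite_eq 0 (Df l)).summable),
    tsum_poly_pmf, tsum_ite_eq]
  unfold Df poissonPmf
  simp only [pow_zero, Nat.factorial_zero, Nat.cast_one, one_mul, div_one]
  field_simp
  ring

lemma pmf_nonneg (l : ℝ) (hl : 0 < l) (k : ℕ) : 0 ≤ poissonPmf l k := by
  unfold poissonPmf
  positivity

lemma risk_estO_one (lam : Fin 1 → ℝ) (hl : 0 < lam 0) :
    risk 1 (estO 1) lam
      = ENNReal.ofReal (1 / 2 + (3 * lam 0 - 1) / 4 * Real.exp (-lam 0)) := by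
  set l := lam 0 with hldef
  have hterm_nonneg : ∀ n y : ℕ, 0 ≤ termF l n y := fun n y =>
    mul_nonneg (div_nonneg (sq_nonneg _) hl.le)
      (mul_nonneg (pmf_nonneg l hl y) (pmf_nonneg l hl n))
  have hS : ∀ (x : Fin 1 → ℕ) (y : ℕ),
      (∑ i, (estO 1 x y i - lam i) ^ 2 / lam i) * jointPmf 1 lam x y
        = termF l (x 0) y := by
    intro x y
    simp only [estO, jointPmf, termF, Fin.sum_univ_one, Fin.prod_univ_one, Nat.cast_one,
      poissonPmf]
    norm_num
    rw [← hldef]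
  have step1 : risk 1 (estO 1) lam
      = ∑' n : ℕ, ∑' y : ℕ, ENNReal.ofReal (termF l n y) := by
    unfold risk
    rw [← Equiv.tsum_eq (Equiv.funUnique (Fin 1) ℕ).symm]
    refine tsum_congr fun n => tsum_congr fun y => ?_
    congr 1
    rw [hS]
    simp
  rw [step1]
  have h1 : ∀ n : ℕ, ∑' y : ℕ, ENNReal.ofReal (termF l n y)
      = ENNReal.ofReal (Gf l n * poissonPmf l n) := fun n => by
    rw [← ENNReal.ofReal_tsum_of_nonneg (hterm_nonneg n) (summable_termF l n), tsum_termF]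
  rw [tsum_congr h1]
  have hGnn : ∀ n : ℕ, 0 ≤ Gf l n * poissonPmf l n := fun n => by
    rw [← tsum_termF]
    exact tsum_nonneg (hterm_nonneg n)
  rw [← ENNReal.ofReal_tsum_of_nonneg hGnn (summable_G l (ne_of_gt hl)), tsum_G l hl]

end Aux

/- STATEMENT 7: for m = 1, sup_{λ_1 > 0} R(λ^O, λ) > 1/2; in fact
R(λ^O, (λ_1)) > 1/2 for every λ_1 > 1/3. -/
theorem stmt_7 :
    (1 / 2 : ℝ≥0∞) < (⨆ lam ∈ {l : Fin 1 → ℝ | ∀ i, 0 < l i}, risk 1 (estO 1) lam) ∧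
    ∀ lam : Fin 1 → ℝ, (∀ i, 0 < lam i) → 1 / 3 < lam 0 →
      (1 / 2 : ℝ≥0∞) < risk 1 (estO 1) lam := by
  have half : (1 / 2 : ℝ≥0∞) = ENNReal.ofReal (1 / 2) := by
    rw [ENNReal.ofReal_div_of_pos (by norm_num), ENNReal.ofReal_one, ENNReal.ofReal_ofNat]
  have key : ∀ lam : Fin 1 → ℝ, (∀ i, 0 < lam i) → 1 / 3 < lam 0 →
      (1 / 2 : ℝ≥0∞) < risk 1 (estO 1) lam := by
    intro lam hpos hgt
    rw [risk_estO_one lam (hpos 0), half]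
    have h3 : 0 < 3 * lam 0 - 1 := by linarith
    have hpos2 : 0 < (3 * lam 0 - 1) / 4 * Real.exp (-lam 0) := by positivity
    rw [ENNReal.ofReal_lt_ofReal_iff (by linarith)]
    linarith
  refine ⟨?_, key⟩
  have hmem : (fun _ : Fin 1 => (1 : ℝ)) ∈ {l : Fin 1 → ℝ | ∀ i, 0 < l i} := fun _ => one_pos
  refine lt_of_lt_of_le (key (fun _ => 1) (fun _ => one_pos) (by norm_num)) ?_
  exact le_iSup₂ (f := fun lam (_ : lam ∈ {l : Fin 1 → ℝ | ∀ i, 0 < l i}) =>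
    risk 1 (estO 1) lam) (fun _ => (1 : ℝ)) hmem
end

section
/- For every m ≥ 1: (a) the estimator δ(x,y) = x (the usual maximum likelihood estimator based on X alone) has constant risk R(δ, λ) = m for every λ ∈ (0,∞)^m; and (b) there exists λ ∈ (0,∞)^m with R(λ̂X, λ) > m − 1/2. Hence (for m ≥ 2, where the minimax risk is m − 1/2) neither estimator based only on X is minimax. -/
open scoped BigOperators ENNReal

section aux
open Finset

lemma poissonPmf_nonneg' {mu : ℝ} (h : 0 ≤ mu) (k : ℕ) : 0 ≤ poissonPmf mu k := by
  unfold poissonPmf; positivity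

lemma hasSum_poisson (mu : ℝ) : HasSum (fun k => poissonPmf mu k) 1 := by
  have h : HasSum (fun k : ℕ => mu ^ k / (Nat.factorial k)) (Real.exp mu) := by
    rw [Real.exp_eq_exp_ℝ]
    exact NormedSpace.expSeries_div_hasSum_exp mu
  have := h.mul_left (Real.exp (-mu))
  simp only [Real.exp_neg] at this ⊢
  convert this using 2 with k
  · rfl
  · unfold poissonPmf
    rw [Real.exp_neg]
    ring
  · rw [inv_mul_cancel₀ (Real.exp_ne_zero mu)]

lemma hasSum_poisson_mean (mu : ℝ) :
    HasSum (fun k : ℕ => (k : ℝ) * poissonPmf mu k) mu := by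
  have h1 : HasSum (fun k : ℕ => ((k + 1 : ℕ) : ℝ) * poissonPmf mu (k + 1)) mu := by
    have := (hasSum_poisson mu).mul_left mu
    rw [mul_one] at this
    convert this using 2 with k
    · rfl
    unfold poissonPmf
    have : ((Nat.factorial (k+1) : ℝ)) = (k+1) * Nat.factorial k := by
      push_cast [Nat.factorial_succ]; ring
    rw [this]
    push_cast
    have hk : ((k:ℝ)+1) ≠ 0 := by positivity
    have hf : (Nat.factorial k : ℝ) ≠ 0 := by positivity
    field_simp
    ring
  have := (hasSum_nat_add_iff (f := fun k => (k : ℝ) * poissonPmf mu k) 1).mp h1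
  simpa using this

lemma hasSum_poisson_fact2 (mu : ℝ) :
    HasSum (fun k : ℕ => (k : ℝ) * ((k : ℝ) - 1) * poissonPmf mu k) (mu ^ 2) := by
  have h1 : HasSum (fun k : ℕ =>
      ((k + 2 : ℕ) : ℝ) * (((k + 2 : ℕ) : ℝ) - 1) * poissonPmf mu (k + 2)) (mu ^ 2) := by
    have := (hasSum_poisson mu).mul_left (mu ^ 2)
    rw [mul_one] at this
    convert this using 2 with k
    · rfl
    unfold poissonPmf
    have h2 : ((Nat.factorial (k+2) : ℝ)) = (k+2) * ((k+1) * Nat.factorial k) := by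
      push_cast [Nat.factorial_succ]; ring
    rw [h2]
    push_cast
    have hk : ((k:ℝ)+1) ≠ 0 := by positivity
    have hk2 : ((k:ℝ)+2) ≠ 0 := by positivity
    have hf : (Nat.factorial k : ℝ) ≠ 0 := by positivity
    field_simp
    ring
  have := (hasSum_nat_add_iff (f := fun k => (k : ℝ) * ((k:ℝ) - 1) * poissonPmf mu k) 2).mp h1
  simpa [Finset.sum_range_succ] using this

lemma hasSum_poisson_var (mu : ℝ) :
    HasSum (fun k : ℕ => ((k : ℝ) - mu) ^ 2 * poissonPmf mu k) mu := by
  have h := ((hasSum_poisson_fact2 mu).add ((hasSum_poisson_mean mu).mul_left (1 - 2*mu))).add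
    ((hasSum_poisson mu).mul_left (mu ^ 2))
  convert h using 2 with k
  · ring
  · ring

lemma ofReal_hasSum {f : ℕ → ℝ} {c : ℝ} (hf : ∀ k, 0 ≤ f k) (h : HasSum f c) :
    ∑' k : ℕ, ENNReal.ofReal (f k) = ENNReal.ofReal c := by
  rw [← ENNReal.ofReal_tsum_of_nonneg hf h.summable, h.tsum_eq]

lemma tsum_ofReal_poisson {mu : ℝ} (h : 0 ≤ mu) :
    ∑' k : ℕ, ENNReal.ofReal (poissonPmf mu k) = 1 := by
  rw [ofReal_hasSum (poissonPmf_nonneg' h) (hasSum_poisson mu), ENNReal.ofReal_one]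

lemma ennreal_ofReal_prod {ι : Type*} (s : Finset ι) (f : ι → ℝ) (hf : ∀ i ∈ s, 0 ≤ f i) :
    ENNReal.ofReal (∏ i ∈ s, f i) = ∏ i ∈ s, ENNReal.ofReal (f i) := by
  induction s using Finset.cons_induction with
  | empty => simp
  | cons a s ha ih =>
      rw [Finset.prod_cons, Finset.prod_cons,
        ENNReal.ofReal_mul (hf a (Finset.mem_cons_self a s)), ih]
      exact fun i hi => hf i (Finset.mem_cons_of_mem hi)

lemma tsum_pi_prod : ∀ {n : ℕ} (f : Fin n → ℕ → ℝ≥0∞),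
    ∑' x : Fin n → ℕ, ∏ i, f i (x i) = ∏ i, ∑' k : ℕ, f i k := by
  intro n
  induction n with
  | zero =>
      intro f
      simp only [Finset.univ_eq_empty, Finset.prod_empty]
      rw [tsum_eq_single (fun i => i.elim0) (fun b hb => absurd (Subsingleton.elim b _) hb)]
  | succ n ih =>
      intro f
      rw [← (Fin.consEquiv (fun _ : Fin (n+1) => ℕ)).tsum_eq (fun x => ∏ i, f i (x i))]
      rw [Fin.prod_univ_succ]
      rw [← ih (fun i => f i.succ)]
      rw [← ENNReal.tsum_mul_right]
      rw [ENNReal.tsum_prod']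
      congr 1 with a
      rw [← ENNReal.tsum_mul_left]
      congr 1 with x
      rw [Fin.prod_univ_succ]
      simp [Fin.consEquiv]

lemma one_coord {m : ℕ} (lam : Fin m → ℝ) (hlam : ∀ i, 0 ≤ lam i) (i : Fin m)
    (g : ℕ → ℝ) (hg : ∀ k, 0 ≤ g k) (c : ℝ)
    (hc : ∑' k : ℕ, ENNReal.ofReal (g k * poissonPmf (lam i) k) = ENNReal.ofReal c) :
    ∑' x : Fin m → ℕ, ENNReal.ofReal (g (x i) * ∏ j, poissonPmf (lam j) (x j))
      = ENNReal.ofReal c := by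
  have key : ∀ x : Fin m → ℕ,
      ENNReal.ofReal (g (x i) * ∏ j, poissonPmf (lam j) (x j))
        = ∏ j, ENNReal.ofReal (if j = i then g (x j) * poissonPmf (lam j) (x j)
            else poissonPmf (lam j) (x j)) := by
    intro x
    rw [← ennreal_ofReal_prod]
    · congr 1
      have : ∀ j : Fin m, (if j = i then g (x j) * poissonPmf (lam j) (x j)
          else poissonPmf (lam j) (x j))
          = (if j = i then g (x j) else 1) * poissonPmf (lam j) (x j) := by
        intro j; split_ifs <;> ring
      rw [Finset.prod_congr rfl (fun j _ => this j), Finset.prod_mul_distrib,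
        Finset.prod_ite_eq' Finset.univ i (fun j => g (x j))]
      simp
    · intro j _
      split_ifs with h
      · subst h; exact mul_nonneg (hg _) (poissonPmf_nonneg' (hlam j) _)
      · exact poissonPmf_nonneg' (hlam j) _
  calc ∑' x : Fin m → ℕ, ENNReal.ofReal (g (x i) * ∏ j, poissonPmf (lam j) (x j))
      = ∑' x : Fin m → ℕ, ∏ j, ENNReal.ofReal (if j = i then g (x j) * poissonPmf (lam j) (x j)
            else poissonPmf (lam j) (x j)) := by exact tsum_congr key
    _ = ∏ j, ∑' k : ℕ, ENNReal.ofReal (if j = i then g k * poissonPmf (lam j) k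
            else poissonPmf (lam j) k) :=
        tsum_pi_prod (fun j k => ENNReal.ofReal (if j = i then g k * poissonPmf (lam j) k
            else poissonPmf (lam j) k))
    _ = ∏ j : Fin m, (if j = i then ENNReal.ofReal c else 1) := by
        refine Finset.prod_congr rfl fun j _ => ?_
        split_ifs with h
        · subst h; exact hc
        · exact tsum_ofReal_poisson (hlam j)
    _ = ENNReal.ofReal c := by
        rw [Finset.prod_ite_eq' Finset.univ i (fun _ => ENNReal.ofReal c)]
        simp

lemma risk_y_out {m : ℕ} (lam : Fin m → ℝ) (hlam : ∀ i, 0 ≤ lam i)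
    (L : (Fin m → ℕ) → ℝ) (hL : ∀ x, 0 ≤ L x) :
    (∑' x : Fin m → ℕ, ∑' y : ℕ, ENNReal.ofReal (L x * jointPmf m lam x y))
      = ∑' x : Fin m → ℕ, ENNReal.ofReal (L x * ∏ j, poissonPmf (lam j) (x j)) := by
  refine tsum_congr fun x => ?_
  have hΛ : 0 ≤ ∑ i, lam i := Finset.sum_nonneg fun i _ => hlam i
  have hprod : 0 ≤ ∏ j, poissonPmf (lam j) (x j) :=
    Finset.prod_nonneg fun j _ => poissonPmf_nonneg' (hlam j) _
  calc ∑' y : ℕ, ENNReal.ofReal (L x * jointPmf m lam x y)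
      = ∑' y : ℕ, ENNReal.ofReal (L x * ∏ j, poissonPmf (lam j) (x j))
          * ENNReal.ofReal (poissonPmf (∑ i, lam i) y) := by
        refine tsum_congr fun y => ?_
        rw [← ENNReal.ofReal_mul (mul_nonneg (hL x) hprod)]
        unfold jointPmf
        ring_nf
    _ = ENNReal.ofReal (L x * ∏ j, poissonPmf (lam j) (x j)) := by
        rw [ENNReal.tsum_mul_left, tsum_ofReal_poisson hΛ, mul_one]

lemma sum_coords {m : ℕ} (lam : Fin m → ℝ) (hlam : ∀ i, 0 ≤ lam i)
    (g : Fin m → ℕ → ℝ) (hg : ∀ i k, 0 ≤ g i k) (c : Fin m → ℝ)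
    (hc : ∀ i, ∑' k : ℕ, ENNReal.ofReal (g i k * poissonPmf (lam i) k) = ENNReal.ofReal (c i)) :
    ∑' x : Fin m → ℕ, ENNReal.ofReal ((∑ i, g i (x i)) * ∏ j, poissonPmf (lam j) (x j))
      = ∑ i, ENNReal.ofReal (c i) := by
  have hprod : ∀ x : Fin m → ℕ, 0 ≤ ∏ j, poissonPmf (lam j) (x j) := fun x =>
    Finset.prod_nonneg fun j _ => poissonPmf_nonneg' (hlam j) _
  calc ∑' x : Fin m → ℕ, ENNReal.ofReal ((∑ i, g i (x i)) * ∏ j, poissonPmf (lam j) (x j))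
      = ∑' x : Fin m → ℕ, ∑ i, ENNReal.ofReal (g i (x i) * ∏ j, poissonPmf (lam j) (x j)) := by
        refine tsum_congr fun x => ?_
        rw [Finset.sum_mul, ENNReal.ofReal_sum_of_nonneg]
        exact fun i _ => mul_nonneg (hg i _) (hprod x)
    _ = ∑ i, ∑' x : Fin m → ℕ, ENNReal.ofReal (g i (x i) * ∏ j, poissonPmf (lam j) (x j)) :=
        Summable.tsum_finsetSum fun i _ => ENNReal.summable
    _ = ∑ i, ENNReal.ofReal (c i) :=
        Finset.sum_congr rfl fun i _ => one_coord lam hlam i (g i) (hg i) (c i) (hc i)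

lemma risk_id {m : ℕ} (lam : Fin m → ℝ) (hlam : ∀ i, 0 < lam i) :
    risk m (fun x _ i => (x i : ℝ)) lam = (m : ℝ≥0∞) := by
  have hlam' : ∀ i, 0 ≤ lam i := fun i => (hlam i).le
  unfold risk
  rw [risk_y_out lam hlam' _
    (fun x => Finset.sum_nonneg fun i _ => div_nonneg (sq_nonneg _) (hlam i).le)]
  have := sum_coords lam hlam' (fun i k => ((k : ℝ) - lam i) ^ 2 / lam i)
      (fun i k => div_nonneg (sq_nonneg _) (hlam i).le) (fun _ => 1) (fun i => ?_)
  · rw [this]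
    simp
  · have h := (hasSum_poisson_var (lam i)).mul_left (1 / lam i)
    have h2 : HasSum (fun k : ℕ => ((k : ℝ) - lam i) ^ 2 / lam i * poissonPmf (lam i) k) 1 := by
      convert h using 2 with k
      · rfl
      · ring
      · rw [one_div, inv_mul_cancel₀ (hlam i).ne']
    exact ofReal_hasSum (fun k => mul_nonneg (div_nonneg (sq_nonneg _) (hlam' i))
      (poissonPmf_nonneg' (hlam' i) k)) h2

lemma loss_ineq {m : ℕ} (hm : 2 ≤ m) (x : Fin m → ℕ) (y : ℕ) {t s : ℝ}
    (ht : 0 < t) (hs : 0 < s) :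
    ∑ i, ((x i : ℝ) - t) ^ 2 / t ≤
      (∑ i, (estCZ m x y i - t) ^ 2 / t) +
        ∑ i, (2 * ((m : ℝ) - 1) / t) * ((((x i : ℝ) - t) ^ 2 / (2 * s) + s / 2)) := by
  rw [← Finset.sum_add_distrib]
  refine Finset.sum_le_sum fun i _ => ?_
  set u : ℝ := (x i : ℝ) with hu
  set S : ℝ := ∑ j, ((x j : ℕ) : ℝ) with hS
  have hS0 : 0 ≤ S := Finset.sum_nonneg fun j _ => Nat.cast_nonneg _
  have huS : u ≤ S := Finset.single_le_sum (f := fun j => ((x j : ℕ) : ℝ))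
    (fun j _ => Nat.cast_nonneg _) (Finset.mem_univ i)
  have hu0 : 0 ≤ u := Nat.cast_nonneg _
  have hm2 : (2 : ℝ) ≤ (m : ℝ) := by exact_mod_cast hm
  set D : ℝ := S + (m : ℝ) - 1 with hD
  have hD1 : 1 ≤ D := by simp only [hD]; linarith
  have hD0 : 0 < D := by linarith
  set c : ℝ := u * ((m : ℝ) - 1) / D with hc
  have hc0 : 0 ≤ c := by
    apply div_nonneg (mul_nonneg hu0 (by linarith)) hD0.le
  have hc1 : c ≤ (m : ℝ) - 1 := by
    rw [hc, div_le_iff₀ hD0]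
    nlinarith
  have hdelta : estCZ m x y i = u - c := by
    unfold estCZ
    rw [hc, ← hu, ← hS, ← hD]
    field_simp
    ring
  rw [hdelta]
  have hw0 : 0 ≤ (u - t) ^ 2 / (2 * s) + s / 2 := by positivity
  have hkey : 2 * c * (u - t) - c ^ 2 ≤
      2 * ((m : ℝ) - 1) * ((u - t) ^ 2 / (2 * s) + s / 2) := by
    rcases le_total u t with h | h
    · have h1 : 0 ≤ c * (t - u) := mul_nonneg hc0 (by linarith)
      have h2 : 0 ≤ 2 * ((m : ℝ) - 1) * ((u - t) ^ 2 / (2 * s) + s / 2) :=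
        mul_nonneg (by linarith) hw0
      nlinarith [sq_nonneg c]
    · have h1 : c * (u - t) ≤ ((m : ℝ) - 1) * (u - t) :=
        mul_le_mul_of_nonneg_right hc1 (by linarith)
      have h2 : (u - t) - s / 2 ≤ (u - t) ^ 2 / (2 * s) := by
        rw [le_div_iff₀ (by linarith : (0:ℝ) < 2 * s)]
        nlinarith [sq_nonneg (u - t - s)]
      have h3 : ((m : ℝ) - 1) * (u - t) ≤ ((m : ℝ) - 1) * ((u - t) ^ 2 / (2 * s) + s / 2) :=
        mul_le_mul_of_nonneg_left (by linarith) (by linarith)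
      nlinarith [sq_nonneg c]
  have hdiv : (u - t) ^ 2 ≤ (u - c - t) ^ 2 +
      2 * ((m : ℝ) - 1) * ((u - t) ^ 2 / (2 * s) + s / 2) := by nlinarith [hkey]
  calc (u - t) ^ 2 / t
      ≤ ((u - c - t) ^ 2 + 2 * ((m : ℝ) - 1) * ((u - t) ^ 2 / (2 * s) + s / 2)) / t := by
        gcongr
    _ = (u - c - t) ^ 2 / t + 2 * ((m : ℝ) - 1) / t * ((u - t) ^ 2 / (2 * s) + s / 2) := by
        field_simp

end aux

/- STATEMENT 10: (a) the estimator δ(x,y) = x has constant risk m, and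
(b) there is a parameter point where the risk of the Clevenson–Zidek estimator
λ̂X exceeds m − 1/2 (hence, for m ≥ 2, neither estimator based only on X is minimax). -/
theorem stmt_10 (m : ℕ) (hm : 1 ≤ m) :
    (∀ lam : Fin m → ℝ, (∀ i, 0 < lam i) →
      risk m (fun x _ i => (x i : ℝ)) lam = (m : ℝ≥0∞)) ∧
    (∃ lam : Fin m → ℝ, (∀ i, 0 < lam i) ∧
      ENNReal.ofReal ((m : ℝ) - 1 / 2) < risk m (estCZ m) lam) := by
  refine ⟨fun lam hlam => risk_id lam hlam, ?_⟩
  by_cases hm2 : 2 ≤ m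
  · -- m ≥ 2 : take lam i = t with t = s², s = 4m²
    have hm0 : (0 : ℝ) < (m : ℝ) := by positivity
    have hmR : (2 : ℝ) ≤ (m : ℝ) := by exact_mod_cast hm2
    set s : ℝ := 4 * (m : ℝ) ^ 2 with hs_def
    have hs : 0 < s := by positivity
    set t : ℝ := s ^ 2 with ht_def
    have ht : 0 < t := by positivity
    set lam : Fin m → ℝ := fun _ => t with hlam_def
    have hpos : ∀ i, 0 < lam i := fun _ => ht
    have hpos' : ∀ i, 0 ≤ lam i := fun i => (hpos i).le
    refine ⟨lam, hpos, ?_⟩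
    -- the correction term
    set a : ℝ := 2 * ((m : ℝ) - 1) / t with ha_def
    have ha0 : 0 ≤ a := by
      apply div_nonneg (by linarith) ht.le
    set G : (Fin m → ℕ) → ℝ :=
      fun x => ∑ i, a * (((x i : ℝ) - t) ^ 2 / (2 * s) + s / 2) with hG_def
    have hG0 : ∀ x, 0 ≤ G x := fun x =>
      Finset.sum_nonneg fun i _ => mul_nonneg ha0 (by positivity)
    set c0 : ℝ := a * (t / (2 * s) + s / 2) with hc0_def
    have hc00 : 0 ≤ c0 := mul_nonneg ha0 (by positivity)
    -- value of the correction term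
    have hEterm : (∑' x : Fin m → ℕ, ∑' y : ℕ,
        ENNReal.ofReal (G x * jointPmf m lam x y)) = ∑ _i : Fin m, ENNReal.ofReal c0 := by
      rw [risk_y_out lam hpos' G hG0]
      refine sum_coords lam hpos'
        (fun i k => a * (((k : ℝ) - t) ^ 2 / (2 * s) + s / 2))
        (fun i k => mul_nonneg ha0 (by positivity)) (fun _ => c0) (fun i => ?_)
      have h := ((hasSum_poisson_var t).mul_left (a / (2 * s))).add
        ((hasSum_poisson t).mul_left (a * (s / 2)))
      have h2 : HasSum (fun k : ℕ =>
          a * (((k : ℝ) - t) ^ 2 / (2 * s) + s / 2) * poissonPmf (lam i) k) c0 := by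
        convert h using 2 with k
        · rfl
        · show a * (((k : ℝ) - t) ^ 2 / (2 * s) + s / 2) * poissonPmf t k = _
          ring
        · rw [hc0_def, mul_one]; ring
      exact ofReal_hasSum (fun k => mul_nonneg (mul_nonneg ha0 (by positivity))
        (poissonPmf_nonneg' (hpos' i) k)) h2
    -- risk of ML bounded by risk of CZ plus correction
    have hle : risk m (fun x _ i => (x i : ℝ)) lam ≤
        risk m (estCZ m) lam + ∑' x : Fin m → ℕ, ∑' y : ℕ,
          ENNReal.ofReal (G x * jointPmf m lam x y) := by
      unfold risk
      rw [← ENNReal.tsum_add]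
      refine ENNReal.tsum_le_tsum fun x => ?_
      rw [← ENNReal.tsum_add]
      refine ENNReal.tsum_le_tsum fun y => ?_
      have hj : 0 ≤ jointPmf m lam x y := by
        unfold jointPmf
        have hΛ : 0 ≤ ∑ i, lam i := Finset.sum_nonneg fun i _ => hpos' i
        exact mul_nonneg (poissonPmf_nonneg' hΛ _)
          (Finset.prod_nonneg fun j _ => poissonPmf_nonneg' (hpos' j) _)
      have hL : (∑ i, ((x i : ℝ) - lam i) ^ 2 / lam i) ≤
          (∑ i, (estCZ m x y i - lam i) ^ 2 / lam i) + G x := by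
        simpa [hlam_def, hG_def, ha_def] using loss_ineq hm2 x y ht hs
      calc ENNReal.ofReal ((∑ i, ((x i : ℝ) - lam i) ^ 2 / lam i) * jointPmf m lam x y)
          ≤ ENNReal.ofReal (((∑ i, (estCZ m x y i - lam i) ^ 2 / lam i) + G x)
              * jointPmf m lam x y) :=
            ENNReal.ofReal_le_ofReal (mul_le_mul_of_nonneg_right hL hj)
        _ = ENNReal.ofReal ((∑ i, (estCZ m x y i - lam i) ^ 2 / lam i) * jointPmf m lam x y
              + G x * jointPmf m lam x y) := by rw [add_mul]
        _ ≤ ENNReal.ofReal ((∑ i, (estCZ m x y i - lam i) ^ 2 / lam i) * jointPmf m lam x y)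
              + ENNReal.ofReal (G x * jointPmf m lam x y) := ENNReal.ofReal_add_le
    rw [risk_id lam hpos, hEterm] at hle
    -- numerics
    have hsum : (∑ _i : Fin m, ENNReal.ofReal c0) = ENNReal.ofReal ((m : ℝ) * c0) := by
      rw [Finset.sum_const, Finset.card_univ, Fintype.card_fin, nsmul_eq_mul,
        ← ENNReal.ofReal_natCast m, ← ENNReal.ofReal_mul (by positivity)]
    have hc0val : (m : ℝ) * c0 = ((m : ℝ) - 1) / (2 * (m : ℝ)) := by
      rw [hc0_def, ha_def, ht_def, hs_def]
      have h4 : (4 * (m:ℝ)^2) ≠ 0 := by positivity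
      field_simp
      ring
    rw [hsum, hc0val] at hle
    by_contra hcon
    push_neg at hcon
    have hfinal : (m : ℝ≥0∞) ≤ ENNReal.ofReal (((m : ℝ) - 1/2) + ((m : ℝ) - 1) / (2 * (m : ℝ))) := by
      rw [ENNReal.ofReal_add (by linarith) (div_nonneg (by linarith) (by positivity))]
      exact hle.trans (add_le_add_left hcon _)
    have hlt : ((m : ℝ) - 1/2) + ((m : ℝ) - 1) / (2 * (m : ℝ)) < (m : ℝ) := by
      have : ((m : ℝ) - 1) / (2 * (m : ℝ)) < 1 / 2 := by
        rw [div_lt_div_iff₀ (by positivity) (by norm_num)]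
        linarith
      linarith
    have := hfinal.trans_lt (by
      calc ENNReal.ofReal (((m : ℝ) - 1/2) + ((m : ℝ) - 1) / (2 * (m : ℝ)))
          < ENNReal.ofReal (m : ℝ) := (ENNReal.ofReal_lt_ofReal_iff hm0).mpr hlt
        _ = (m : ℝ≥0∞) := ENNReal.ofReal_natCast m)
    exact lt_irrefl _ this
  · -- m = 1 : estCZ coincides with the ML estimator
    have hm1 : m = 1 := by omega
    subst hm1
    have he : estCZ 1 = fun x (_ : ℕ) (i : Fin 1) => ((x i : ℕ) : ℝ) := by
      funext x y i
      have hi : i = 0 := Subsingleton.elim i 0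
      subst hi
      unfold estCZ
      simp only [Fin.sum_univ_one, Nat.cast_one, add_sub_cancel_right]
      rcases eq_or_ne ((x 0 : ℝ)) 0 with h | h
      · rw [h]; simp
      · rw [mul_div_assoc, div_self h, mul_one]
    refine ⟨fun _ => 1, fun i => one_pos, ?_⟩
    rw [he, risk_id (fun _ => 1) (fun i => one_pos)]
    have : ((1:ℕ) : ℝ) - 1/2 = 1/2 := by norm_num
    rw [this, Nat.cast_one]
    exact ENNReal.ofReal_lt_one.mpr (by norm_num)
end
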